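/- arXiv:2002.11793 — 6 statements merged into one kernel-verified Lean document; each statement's English description precedes it below -/
import Mathlib

section
/- Let n be divisible by 4 and let G be the graph on vertex set V = V₁ ∪ V₂ with |V₁| = n/4, |V₂| = 3n/4, whose edges are all pairs of vertices except the pairs with both endpoints in V₁ (i.e., G = Kₙ minus a clique on n/4 vertices). Define f : E(G) → {−1, +1} by f(e) = −1 if e has an endpoint in V₁ and f(e) = +1 otherwise. Then every Hamilton cycle H of G satisfies f(H) = 0. Consequently the minimum degree bound (3/4 + c)n in the linear Hamilton-cycle discrepancy theorem cannot be lowered to 3n/4. -/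
open SimpleGraph Finset

/-- The extremal graph: `K_n` minus a clique on the first `n/4 = m` vertices
(vertex set `Fin (4m)`, first `m` vertices form the independent set `V₁`). -/
def extremalGraph (m : ℕ) : SimpleGraph (Fin (4 * m)) :=
  SimpleGraph.fromRel (fun a b => ¬(a.val < m ∧ b.val < m))

/-- The labeling: `-1` on every edge having an endpoint in `V₁`, `+1` otherwise. -/
def extremalLabel (m : ℕ) : Sym2 (Fin (4 * m)) → ℤ :=
  fun e => if ∃ v ∈ e, (v : Fin (4 * m)).val < m then -1 else 1

private lemma label_eq (m : ℕ) (a b : Fin (4 * m)) (hab : (extremalGraph m).Adj a b) :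
    extremalLabel m s(a, b) =
      1 - 2 * (if a.val < m then (1 : ℤ) else 0) - 2 * (if b.val < m then (1 : ℤ) else 0) := by
  obtain ⟨hne, h⟩ := hab
  have hnb : ¬(a.val < m ∧ b.val < m) := by tauto
  simp only [extremalLabel, Sym2.mem_iff]
  by_cases ha : a.val < m <;> by_cases hb : b.val < m <;> simp [ha, hb] <;> tauto

private lemma walk_sum (m : ℕ) {u w : Fin (4 * m)} (p : (extremalGraph m).Walk u w) :
    (p.edges.map (extremalLabel m)).sum =
      (p.length : ℤ)
        - 2 * (p.support.dropLast.countP (fun x => decide (x.val < m)) : ℤ)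
        - 2 * (p.support.tail.countP (fun x => decide (x.val < m)) : ℤ) := by
  induction p with
  | nil => simp
  | cons h q ih =>
    rename_i a b c
    have hsupne : q.support ≠ [] := q.support_ne_nil
    have hdrop : (a :: q.support).dropLast = a :: q.support.dropLast := by
      cases hq : q.support with
      | nil => exact absurd hq hsupne
      | cons x l => simp [hq]
    have hq2 : q.support.countP (fun x => decide (x.val < m))
        = q.support.tail.countP (fun x => decide (x.val < m))
          + (if decide (b.val < m) = true then 1 else 0) := by
      conv_lhs => rw [q.support_eq_cons]
      rw [List.countP_cons]
    simp only [SimpleGraph.Walk.edges_cons, SimpleGraph.Walk.support_cons,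
      SimpleGraph.Walk.length_cons, List.map_cons, List.sum_cons, ih, hdrop,
      List.tail_cons]
    rw [label_eq m a b h, List.countP_cons, hq2]
    push_cast
    by_cases ha : a.val < m <;> by_cases hb : b.val < m <;>
      simp [ha, hb] <;> ring

private lemma countP_of_count_one {α : Type*} [Fintype α] [DecidableEq α] (l : List α)
    (h : ∀ a, l.count a = 1) (P : α → Bool) :
    l.countP P = (Finset.univ.filter (fun a => P a = true)).card := by
  classical
  have hl : (l : Multiset α) = Finset.univ.val := by
    refine Multiset.ext.2 fun a => ?_
    rw [Multiset.coe_count, h a, Multiset.count_univ]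
  have h2 : Multiset.countP (fun a => P a = true) (l : Multiset α)
      = Multiset.countP (fun a => P a = true) Finset.univ.val := by rw [hl]
  rw [Multiset.coe_countP] at h2
  simp only [decide_eq_true_eq, Bool.decide_coe] at h2
  rw [h2, Finset.card, Finset.filter_val, Multiset.countP_eq_card_filter]

private lemma card_small (m : ℕ) :
    (Finset.univ.filter (fun a : Fin (4 * m) => decide (a.val < m) = true)).card = m := by
  have : (Finset.univ.filter (fun a : Fin (4 * m) => decide (a.val < m) = true))
      = (Finset.range m).attachFin (fun x hx => lt_of_lt_of_le (Finset.mem_range.mp hx)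
          (by omega)) := by
    ext a
    simp [Finset.mem_attachFin]
  rw [this, Finset.card_attachFin, Finset.card_range]

/-- For `n = 4m` divisible by 4, in the graph `Kₙ` minus a clique on `n/4`
vertices, with the labeling `-1` on edges touching `V₁` and `+1` elsewhere, every Hamilton
cycle has label-sum `0`. -/
theorem extremal_hamilton_zero_discrepancy (m : ℕ) (hm : 0 < m) (v : Fin (4 * m))
    (H : (extremalGraph m).Walk v v) (hH : H.IsHamiltonianCycle) :
    (H.edges.map (extremalLabel m)).sum = 0 := by
  have hlen : H.length = 4 * m := by
    have := hH.length_eq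
    simpa using this
  have hcount : ∀ a, H.support.tail.count a = 1 := by
    intro a
    have := hH.isHamiltonian_tail a
    rwa [SimpleGraph.Walk.support_tail_of_not_nil _ hH.1.not_nil] at this
  have htail : H.support.tail.countP (fun x => decide (x.val < m)) = m := by
    rw [countP_of_count_one _ hcount, card_small]
  have hdroptail : H.support.dropLast.countP (fun x => decide (x.val < m))
      = H.support.tail.countP (fun x => decide (x.val < m)) := by
    have hne : H.support ≠ [] := H.support_ne_nil
    have h1 : H.support = H.support.dropLast ++ [v] := by
      conv_lhs => rw [← List.dropLast_append_getLast hne]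
      rw [H.getLast_support]
    have h2 : H.support = v :: H.support.tail := by
      conv_lhs => rw [H.support_eq_cons]
    have := congrArg (List.countP (fun x => decide (x.val < m))) (h1.symm.trans h2)
    rw [List.countP_append, List.countP_cons] at this
    simp only [List.countP_nil, List.countP_cons] at this
    omega
  rw [walk_sum m H, hlen, htail, hdroptail, htail]
  push_cast
  ring
end

section
/- Let G be a connected graph on n vertices and let C be a vertex cut of G, that is, V(G) = A ∪ B ∪ C is a partition such that there are no edges between A and B; suppose |A| ≤ |B|. Then the spanning tree discrepancy satisfies 𝒟(G, 𝒯ₙ) ≤ |B| − |A| + |C|. -/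
open SimpleGraph Finset

/-- The sum of the labels `f` over a set `E` of edges (of a finite vertex type). -/
noncomputable def edgeLabelSum {V : Type*} [Fintype V] [DecidableEq V]
    (f : Sym2 V → ℤ) (E : Set (Sym2 V)) : ℤ :=
  ∑ e : Sym2 V, E.indicator f e

open SimpleGraph.Walk in
/-- Parent map of a tree rooted at `r`: every non-root vertex has a "parent edge"
incident to it, the assignment is injective, and every edge is a parent edge. -/
lemma exists_parent_map {V : Type*} [DecidableEq V] {T : SimpleGraph V}
    (hT : T.IsTree) (r : V) :
    ∃ Φ : V → Sym2 V,
      (∀ w, w ≠ r → w ∈ Φ w ∧ Φ w ∈ T.edgeSet) ∧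
      (∀ w w', w ≠ r → w' ≠ r → Φ w = Φ w' → w = w') ∧
      (∀ e ∈ T.edgeSet, ∃ w, w ≠ r ∧ Φ w = e) := by
  choose f hf hf' using (hT.existsUnique_path · r)
  refine ⟨fun w => if h : w = r then s(r, r) else ((f w).firstDart (not_nil_of_ne h)).edge,
    ?_, ?_, ?_⟩
  · intro w hw
    dsimp only
    rw [dif_neg hw]
    constructor
    · rw [edge_firstDart]
      exact Sym2.mem_mk_left _ _
    · exact ((f w).firstDart (not_nil_of_ne hw)).edge_mem
  · intro a b ha hb h
    dsimp only at h
    rw [dif_neg ha, dif_neg hb] at h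
    wlog h' : (f a).length ≤ (f b).length generalizing a b
    · exact Eq.symm (this _ _ hb ha h.symm (le_of_not_ge h'))
    rw [dart_edge_eq_iff] at h
    obtain (h | h) := h
    · exact (congrArg (·.fst) h)
    · have h1 : ((f a).firstDart <| not_nil_of_ne ha).snd = b :=
        congrArg (·.snd) h
      have h3 := congrArg length (hf' _ ((f _).tail.copy h1 rfl) ?_)
      · have h4 : ((f a).tail.copy h1 rfl).length = (f a).tail.length := length_copy _ _ _
        rw [h4, ← add_left_inj 1,
          length_tail_add_one (not_nil_of_ne ha)] at h3
        omega
      · simp only [ne_eq, eq_mp_eq_cast, id_eq, isPath_copy]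
        exact (isPath_copy ..).2 (hf _).tail
  · intro e he
    induction e with
    | _ x y =>
    rw [SimpleGraph.mem_edgeSet] at he
    wlog h' : (f x).length ≤ (f y).length generalizing x y
    · obtain ⟨w, hw, hw'⟩ := this y x he.symm (le_of_not_ge h')
      exact ⟨w, hw, hw'.trans (Sym2.eq_swap)⟩
    have hy : y ≠ r := by
      rintro rfl
      rw [← hf' _ nil IsPath.nil, length_nil,
          ← hf' _ (.cons he .nil) (IsPath.nil.cons <| by simpa using he.ne),
          length_cons, length_nil] at h'
      simp [Nat.le_zero, Nat.one_ne_zero] at h'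
    refine ⟨y, hy, ?_⟩
    dsimp only
    rw [dif_neg hy]
    refine dart_edge_eq_mk'_iff.2 <| Or.inr ?_
    rw [← hf' _ (.cons he.symm (f x)) ((cons_isPath_iff _ _).2 ⟨hf _, fun hy2 => ?contra⟩)]
    · simp only [firstDart_toProd, getVert_cons_succ, getVert_zero, Prod.swap_prod_mk]
    case contra =>
      suffices (f x).takeUntil y hy2 = .cons he .nil by
        rw [← take_spec _ hy2] at h'
        simp [this, hf' _ _ ((hf _).dropUntil hy2)] at h'
      refine (hT.existsUnique_path _ _).unique ((hf _).takeUntil _) ?_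
      simp [he.ne]

/-- Let `G` be a connected graph whose vertex set is partitioned as
`A ∪ B ∪ C` with no edges between `A` and `B` (so `C` is a vertex cut), and `|A| ≤ |B|`.
Then the spanning-tree discrepancy of `G` is at most `|B| − |A| + |C|`: there is a
`±1`-labeling `f` of the edges such that every spanning tree `T` of `G` satisfies
`|f(T)| ≤ |B| − |A| + |C|`. -/
theorem spanning_tree_discrepancy_cut {V : Type*} [Fintype V] [DecidableEq V]
    (G : SimpleGraph V) (hG : G.Connected)
    (A B C : Finset V)
    (hAB : Disjoint A B) (hAC : Disjoint A C) (hBC : Disjoint B C)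
    (hcover : A ∪ B ∪ C = univ)
    (hnoedge : ∀ a ∈ A, ∀ b ∈ B, ¬G.Adj a b)
    (hcard : A.card ≤ B.card) :
    ∃ f : Sym2 V → ℤ,
      (∀ e ∈ G.edgeSet, f e = 1 ∨ f e = -1) ∧
      ∀ T : SimpleGraph V, T ≤ G → T.IsTree →
        |edgeLabelSum f T.edgeSet| ≤ (B.card : ℤ) - A.card + C.card := by
  classical
  set f : Sym2 V → ℤ := fun e => if ∃ a ∈ A, a ∈ e then (-1 : ℤ) else 1 with hf
  refine ⟨f, ?_, ?_⟩
  · intro e _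
    by_cases h : ∃ a ∈ A, a ∈ e
    · exact Or.inr (by simp [hf, h])
    · exact Or.inl (by simp [hf, h])
  intro T hTG hT
  -- the number of vertices
  have hcardV : A.card + B.card + C.card = Fintype.card V := by
    rw [← Finset.card_univ, ← hcover,
      Finset.card_union_of_disjoint (Finset.disjoint_union_left.mpr ⟨hAC, hBC⟩),
      Finset.card_union_of_disjoint hAB]
  -- rewrite the sum over the tree's edge finset
  have hsum : edgeLabelSum f T.edgeSet = ∑ e ∈ T.edgeFinset, f e := by
    rw [edgeLabelSum]
    rw [← Finset.sum_filter_add_sum_filter_not Finset.univ (· ∈ T.edgeFinset)]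
    have h1 : ∀ e ∈ Finset.univ.filter (· ∈ T.edgeFinset), T.edgeSet.indicator f e = f e := by
      intro e he
      simp only [Finset.mem_filter, SimpleGraph.mem_edgeFinset] at he
      exact Set.indicator_of_mem he.2 f
    have h2 : ∀ e ∈ Finset.univ.filter (¬ · ∈ T.edgeFinset), T.edgeSet.indicator f e = 0 := by
      intro e he
      simp only [Finset.mem_filter, SimpleGraph.mem_edgeFinset] at he
      exact Set.indicator_of_notMem he.2 f
    rw [Finset.sum_congr rfl h1, Finset.sum_congr rfl h2, Finset.sum_const_zero, add_zero,
      Finset.filter_mem_eq_inter, Finset.univ_inter]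
  set TA : Finset (Sym2 V) := T.edgeFinset.filter (fun e => ∃ a ∈ A, a ∈ e) with hTA
  have hsplit : ∑ e ∈ T.edgeFinset, f e =
      (T.edgeFinset.card : ℤ) - 2 * TA.card := by
    rw [← Finset.sum_filter_add_sum_filter_not T.edgeFinset (fun e => ∃ a ∈ A, a ∈ e)]
    have h1 : ∑ e ∈ TA, f e = -(TA.card : ℤ) := by
      rw [Finset.sum_congr rfl (fun e he => ?_), Finset.sum_const, nsmul_eq_mul, mul_neg_one]
      simp only [hTA, Finset.mem_filter] at he
      simp [hf, he.2]
    have h2 : ∑ e ∈ T.edgeFinset.filter (fun e => ¬ ∃ a ∈ A, a ∈ e), f e =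
        ((T.edgeFinset.filter (fun e => ¬ ∃ a ∈ A, a ∈ e)).card : ℤ) := by
      rw [Finset.sum_congr rfl (fun e he => ?_), Finset.sum_const, nsmul_eq_mul, mul_one]
      simp only [Finset.mem_filter] at he
      simp [hf, he.2]
    rw [h1, h2, Finset.filter_not, Finset.card_sdiff_of_subset (Finset.filter_subset _ _)]
    have := Finset.card_filter_le T.edgeFinset (fun e => ∃ a ∈ A, a ∈ e)
    push_cast [hTA]
    omega
  have hN : T.edgeFinset.card + 1 = Fintype.card V := hT.card_edgeFinset
  rw [hsum, hsplit]
  by_cases hA : A.Nonempty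
  · -- C is nonempty
    have hB : B.Nonempty := Finset.card_pos.mp (lt_of_lt_of_le (Finset.card_pos.mpr hA) hcard)
    obtain ⟨b, hb⟩ := hB
    have hCne : C.Nonempty := by
      obtain ⟨a, ha⟩ := hA
      have key : ∀ (u w : V) (p : G.Walk u w), u ∈ A → w ∈ B → C.Nonempty := by
        intro u w p
        induction p with
        | nil => exact fun hu hw => absurd hw (Finset.disjoint_left.mp hAB hu)
        | @cons u v w h q ih =>
          intro hu hw
          have hv : v ∈ A ∪ B ∪ C := hcover ▸ Finset.mem_univ v
          simp only [Finset.mem_union] at hv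
          rcases hv with (hv | hv) | hv
          · exact ih hv hw
          · exact absurd h (hnoedge u hu v hv)
          · exact ⟨v, hv⟩
      exact key a b (hG a b).some ha hb
    obtain ⟨r, hr⟩ := hCne
    have hrA : r ∉ A := Finset.disjoint_right.mp hAC hr
    obtain ⟨Φ, hΦ1, hΦ2, hΦ3⟩ := exists_parent_map hT r
    -- lower bound : |A| ≤ |TA|
    have hlow : A.card ≤ TA.card := by
      apply Finset.card_le_card_of_injOn Φ
      · intro a ha
        have hane : a ≠ r := fun h => hrA (h ▸ ha)
        refine Finset.mem_filter.mpr ⟨SimpleGraph.mem_edgeFinset.mpr (hΦ1 a hane).2,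
          a, ha, (hΦ1 a hane).1⟩
      · intro a ha a' ha' h
        exact hΦ2 a a' (fun h => hrA (h ▸ ha)) (fun h => hrA (h ▸ ha')) h
    -- upper bound : |TA| ≤ |A ∪ C| - 1
    have hup : TA.card ≤ ((A ∪ C).erase r).card := by
      have hmem : ∀ e ∈ TA, ∃ w, w ≠ r ∧ w ∈ e ∧ Φ w = e := by
        intro e he
        have heT : e ∈ T.edgeSet := SimpleGraph.mem_edgeFinset.mp (Finset.mem_filter.mp he).1
        obtain ⟨w, hw, hw'⟩ := hΦ3 e heT
        exact ⟨w, hw, hw' ▸ (hΦ1 w hw).1, hw'⟩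
      choose ψ hψr hψe hψΦ using hmem
      apply Finset.card_le_card_of_injOn (fun e => if h : e ∈ TA then ψ e h else r)
      · intro e he
        dsimp only
        rw [dif_pos (Finset.mem_coe.mp he)]
        refine Finset.mem_erase.mpr ⟨hψr e he, ?_⟩
        -- every endpoint of an edge touching A is in A ∪ C
        obtain ⟨hTe, a, ha, hae⟩ := Finset.mem_filter.mp he
        have heG : e ∈ G.edgeSet := SimpleGraph.edgeSet_mono hTG (SimpleGraph.mem_edgeFinset.mp hTe)
        have hwe := hψe e he
        have hwu : ψ e he ∈ A ∪ B ∪ C := hcover ▸ Finset.mem_univ _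
        simp only [Finset.mem_union] at hwu ⊢
        rcases hwu with (hw | hw) | hw
        · exact Or.inl hw
        · exfalso
          have hne : a ≠ ψ e he := fun h => Finset.disjoint_left.mp hAB ha (h ▸ hw)
          have : e = s(a, ψ e he) := (Sym2.mem_and_mem_iff hne).mp ⟨hae, hwe⟩
          rw [this, SimpleGraph.mem_edgeSet] at heG
          exact hnoedge a ha _ hw heG
        · exact Or.inr hw
      · intro e he e' he' h
        simp only [Finset.mem_coe] at he he'
        dsimp only at h
        rw [dif_pos he, dif_pos he'] at h
        have := hψΦ e he
        rw [h, hψΦ e' he'] at this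
        exact this.symm
    have hAC1 : ((A ∪ C).erase r).card = (A ∪ C).card - 1 :=
      Finset.card_erase_of_mem (Finset.mem_union_right _ hr)
    have hACcard : (A ∪ C).card = A.card + C.card := Finset.card_union_of_disjoint hAC
    have hC1 : 1 ≤ C.card := Finset.card_pos.mpr ⟨r, hr⟩
    have hA1 : 1 ≤ A.card := Finset.card_pos.mpr hA
    rw [abs_le]
    omega
  · -- A is empty : all labels are +1
    have hA0 : A.card = 0 := by
      rw [Finset.card_eq_zero]
      exact Finset.not_nonempty_iff_eq_empty.mp hA
    have hTA0 : TA.card = 0 := by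
      rw [Finset.card_eq_zero, hTA, Finset.filter_eq_empty_iff]
      rintro e - ⟨a, ha, -⟩
      exact hA ⟨a, ha⟩
    rw [abs_le]
    omega
end

section
/- Let k and ℓ be positive integers. Then the (not necessarily spanning) tree discrepancy of the grid satisfies 𝒟(Pₖ □ Pₗ, 𝒯) > kℓ/8 − max{k, ℓ}/8 − min{k, ℓ}; that is, for every labeling f : E(Pₖ □ Pₗ) → {−1, +1} there exists a subtree T of Pₖ □ Pₗ with |f(T)| > kℓ/8 − max{k, ℓ}/8 − min{k, ℓ}. -/
open SimpleGraph Finset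

set_option linter.unnecessarySeqFocus false

namespace GridDisc



variable {V : Type*} {G : SimpleGraph V}

/-- A list of (parent, child) pairs that can be attached to a growing tree with
current vertex set `A`. -/
def Good (G : SimpleGraph V) : List (V × V) → Set V → Prop
  | [], _ => True
  | q :: t, A => q.1 ∈ A ∧ q.2 ∉ A ∧ G.Adj q.1 q.2 ∧ Good G t (insert q.2 A)

/-- The set of children of a list of pairs. -/
def chl (L : List (V × V)) : Set V := {v | ∃ q ∈ L, v = q.2}

lemma chl_nil : chl ([] : List (V × V)) = ∅ := by simp [chl]

lemma chl_append (L₁ L₂ : List (V × V)) : chl (L₁ ++ L₂) = chl L₁ ∪ chl L₂ := by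
  ext v; simp [chl, or_and_right, exists_or]

lemma Good.append {L₁ L₂ : List (V × V)} {A : Set V} (h₁ : Good G L₁ A)
    (h₂ : Good G L₂ (A ∪ chl L₁)) : Good G (L₁ ++ L₂) A := by
  induction L₁ generalizing A with
  | nil => simpa [chl_nil] using h₂
  | cons q t ih =>
    obtain ⟨hp, hc, hadj, ht⟩ := h₁
    refine ⟨hp, hc, hadj, ih ht ?_⟩
    convert h₂ using 1
    ext v; simp [chl]; tauto

lemma Good.snd_not_mem {L : List (V × V)} {A : Set V} (h : Good G L A) :
    ∀ q ∈ L, q.2 ∉ A := by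
  induction L generalizing A with
  | nil => simp
  | cons q t ih =>
    obtain ⟨hp, hc, hadj, ht⟩ := h
    intro q' hq'
    rcases List.mem_cons.1 hq' with rfl | hq'
    · exact hc
    · exact fun hA => ih ht q' hq' (Set.mem_insert_of_mem _ hA)

lemma Good.adj {L : List (V × V)} {A : Set V} (h : Good G L A) :
    ∀ q ∈ L, G.Adj q.1 q.2 := by
  induction L generalizing A with
  | nil => simp
  | cons q t ih =>
    obtain ⟨hp, hc, hadj, ht⟩ := h
    intro q' hq'
    rcases List.mem_cons.1 hq' with rfl | hq'
    · exact hadj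
    · exact ih ht q' hq'

lemma Good.snd_nodup {L : List (V × V)} {A : Set V} (h : Good G L A) :
    (L.map Prod.snd).Nodup := by
  induction L generalizing A with
  | nil => simp
  | cons q t ih =>
    obtain ⟨hp, hc, hadj, ht⟩ := h
    refine List.nodup_cons.2 ⟨?_, ih ht⟩
    intro hmem
    obtain ⟨q', hq', hq'2⟩ := List.mem_map.1 hmem
    exact ht.snd_not_mem q' hq' (hq'2 ▸ Set.mem_insert _ _)

lemma Good.sym2_nodup {L : List (V × V)} {A : Set V} (h : Good G L A) :
    (L.map fun q => s(q.1, q.2)).Nodup := by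
  induction L generalizing A with
  | nil => simp
  | cons q t ih =>
    obtain ⟨hp, hc, hadj, ht⟩ := h
    refine List.nodup_cons.2 ⟨?_, ih ht⟩
    intro hmem
    obtain ⟨q', hq', hq'2⟩ := List.mem_map.1 hmem
    have h2 := ht.snd_not_mem q' hq'
    rw [Sym2.eq_iff] at hq'2
    rcases hq'2 with ⟨h1, h2'⟩ | ⟨h1, h2'⟩
    · exact h2 (h2' ▸ Set.mem_insert _ _)
    · exact h2 (by rw [h2']; exact Set.mem_insert_of_mem _ hp)

lemma good_batch {L : List (V × V)} {A : Set V}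
    (h1 : ∀ q ∈ L, q.1 ∈ A) (h2 : ∀ q ∈ L, q.2 ∉ A)
    (h3 : (L.map Prod.snd).Nodup) (h4 : ∀ q ∈ L, G.Adj q.1 q.2) :
    Good G L A := by
  induction L generalizing A with
  | nil => trivial
  | cons q t ih =>
    rw [List.map_cons, List.nodup_cons] at h3
    refine ⟨h1 q (by simp), h2 q (by simp), h4 q (by simp), ih ?_ ?_ h3.2 ?_⟩
    · intro q' hq'; exact Set.mem_insert_of_mem _ (h1 q' (by simp [hq']))
    · intro q' hq'
      intro hmem
      rcases Set.mem_insert_iff.1 hmem with h | h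
      · exact h3.1 (List.mem_map.2 ⟨q', hq', h⟩)
      · exact h2 q' (by simp [hq']) h
    · intro q' hq'; exact h4 q' (by simp [hq'])

/-- The list of consecutive pairs of a "path" `f 0, f 1, ..., f n`. -/
def pathList (f : ℕ → V) (n : ℕ) : List (V × V) :=
  (List.range n).map fun i => (f i, f (i + 1))

lemma good_pathList {f : ℕ → V} {n : ℕ} {A : Set V}
    (hinj : ∀ i ≤ n, ∀ j ≤ n, f i = f j → i = j) (h0 : f 0 ∈ A)
    (hA : ∀ i, 1 ≤ i → i ≤ n → f i ∉ A) (hadj : ∀ i < n, G.Adj (f i) (f (i + 1))) :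
    Good G (pathList f n) A := by
  induction n generalizing f A with
  | zero => trivial
  | succ n ih =>
    have hrw : pathList f (n + 1) = (f 0, f 1) :: pathList (fun i => f (i + 1)) n := by
      unfold pathList
      rw [List.range_succ_eq_map, List.map_cons, List.map_map]
      rfl
    rw [hrw]
    refine ⟨h0, hA 1 le_rfl (by omega), hadj 0 (by omega), ih ?_ ?_ ?_ ?_⟩
    · intro i hi j hj hij
      have := hinj (i + 1) (by omega) (j + 1) (by omega) hij
      omega
    · exact Set.mem_insert _ _
    · intro i hi1 hin
      intro hmem
      rcases Set.mem_insert_iff.1 hmem with h | h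
      · have := hinj (i + 1) (by omega) 1 (by omega) h
        omega
      · exact hA (i + 1) (by omega) (by omega) h
    · intro i hi; exact hadj (i + 1) (by omega)

lemma chl_pathList (f : ℕ → V) (n : ℕ) :
    chl (pathList f n) = {v | ∃ i, 1 ≤ i ∧ i ≤ n ∧ v = f i} := by
  ext v
  simp only [chl, pathList, List.mem_map, List.mem_range, Set.mem_setOf_eq]
  constructor
  · rintro ⟨q, ⟨i, hi, rfl⟩, rfl⟩
    exact ⟨i + 1, by omega, by omega, rfl⟩
  · rintro ⟨i, h1, h2, rfl⟩
    exact ⟨(f (i - 1), f i), ⟨i - 1, by omega, by rw [Nat.sub_add_cancel h1]⟩, rfl⟩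

lemma good_build (L : List (V × V)) :
    ∀ (A : Set V) (H : G.Subgraph), Good G L A → H.verts = A → H.Connected →
    ∃ H' : G.Subgraph, H'.verts = A ∪ chl L ∧
      (∀ u v, H'.Adj u v ↔ H.Adj u v ∨ ∃ q ∈ L, (u, v) = q ∨ (v, u) = q) ∧
      H'.Connected := by
  induction L with
  | nil =>
    intro A H _ hv hc
    exact ⟨H, by simp [chl_nil, hv], by simp, hc⟩
  | cons q t ih =>
    rintro A H ⟨hp, hc, hadj, ht⟩ hv hconn
    have hGadj : G.Adj q.1 q.2 := hadj
    set K := H ⊔ G.subgraphOfAdj hGadj with hK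
    have hKv : K.verts = insert q.2 A := by
      rw [hK, Subgraph.verts_sup, hv, subgraphOfAdj_verts]
      ext v
      simp only [Set.mem_union, Set.mem_insert_iff, Set.mem_singleton_iff]
      constructor
      · rintro (h | h | h) <;> [exact Or.inr h; exact (Or.inr (h ▸ hp)); exact Or.inl h]
      · rintro (h | h) <;> [exact Or.inr (Or.inr h); exact Or.inl h]
    have hKconn : K.Connected := by
      refine Subgraph.connected_sup hconn.preconnected (Subgraph.subgraphOfAdj_connected hGadj).preconnected ⟨q.1, ?_⟩
      constructor
      · rw [hv]; exact hp
      · simp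
    obtain ⟨H', hv', hadj', hconn'⟩ := ih (insert q.2 A) K ht hKv hKconn
    refine ⟨H', ?_, ?_, hconn'⟩
    · rw [hv']
      ext v; simp only [Set.mem_union, Set.mem_insert_iff, chl, Set.mem_setOf_eq,
        List.mem_cons]
      constructor
      · rintro ((rfl | h) | ⟨q', hq', rfl⟩)
        · exact Or.inr ⟨q, Or.inl rfl, rfl⟩
        · exact Or.inl h
        · exact Or.inr ⟨q', Or.inr hq', rfl⟩
      · rintro (h | ⟨q', (rfl | hq'), rfl⟩)
        · exact Or.inl (Or.inr h)
        · exact Or.inl (Or.inl rfl)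
        · exact Or.inr ⟨q', hq', rfl⟩
    · intro u v
      rw [hadj' u v]
      have : K.Adj u v ↔ H.Adj u v ∨ ((u, v) = q ∨ (v, u) = q) := by
        rw [hK, Subgraph.sup_adj, subgraphOfAdj_adj]
        constructor
        · rintro (h | h)
          · exact Or.inl h
          · rw [Sym2.eq_iff] at h
            rcases h with ⟨rfl, rfl⟩ | ⟨rfl, rfl⟩
            · exact Or.inr (Or.inl rfl)
            · exact Or.inr (Or.inr rfl)
        · rintro (h | h | h)
          · exact Or.inl h
          · rw [← h]; right; rfl
          · rw [← h]; right; exact Sym2.eq_swap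
      rw [this]
      simp only [List.mem_cons]
      constructor
      · rintro ((h | h) | ⟨q', hq', hh⟩)
        · exact Or.inl h
        · exact Or.inr ⟨q, Or.inl rfl, h⟩
        · exact Or.inr ⟨q', Or.inr hq', hh⟩
      · rintro (h | ⟨q', (rfl | hq'), hh⟩)
        · exact Or.inl (Or.inl h)
        · exact Or.inl (Or.inr hh)
        · exact Or.inr ⟨q', hq', hh⟩




lemma isAcyclic_of_rank {W : Type*} [DecidableEq W] (H : SimpleGraph W) (rank : W → ℕ)
    (hne : ∀ u v, H.Adj u v → rank u ≠ rank v)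
    (huniq : ∀ u v w, H.Adj u v → H.Adj u w → rank v < rank u → rank w < rank u → v = w) :
    H.IsAcyclic := by
  intro v c hc
  have hsupne : c.support.toFinset.Nonempty := by
    rw [List.toFinset_nonempty_iff]
    exact c.support_ne_nil
  obtain ⟨u, hu, hmax⟩ := Finset.exists_max_image c.support.toFinset rank hsupne
  rw [List.mem_toFinset] at hu
  have hmax' : ∀ x ∈ c.support, rank x ≤ rank u := fun x hx => hmax x (List.mem_toFinset.2 hx)
  have hc' := hc.rotate hu
  have hsup : ∀ x ∈ (c.rotate u hu).support, rank x ≤ rank u := by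
    intro x hx
    rcases (Walk.mem_support_iff _).1 hx with rfl | hx'
    · exact le_rfl
    · exact hmax' x (List.mem_of_mem_tail ((Walk.support_rotate c u hu).mem_iff.1 hx'))
  set c' := c.rotate u hu with hc'def
  clear_value c'
  cases c' with
  | nil => exact hc'.ne_nil rfl
  | @cons _ w₁ _ h q =>
    obtain ⟨x, q', h₂, heq⟩ := Walk.exists_cons_eq_concat h q
    -- the first and last edges of the cycle
    have hlen := hc'.three_le_length
    have hnodup := hc'.edges_nodup
    have hw₁ : w₁ ∈ (Walk.cons h q).support := by
      rw [Walk.support_cons]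
      exact List.mem_cons_of_mem _ q.start_mem_support
    have hx : x ∈ (Walk.cons h q).support := by
      apply Walk.fst_mem_support_of_mem_edges (t := x) (u := u)
      rw [heq, Walk.edges_concat, List.concat_eq_append]
      exact List.mem_append_right _ (by simp)
    have hrw₁ : rank w₁ < rank u :=
      lt_of_le_of_ne (hsup _ hw₁) (fun hh => hne u w₁ h hh.symm)
    have hrx : rank x < rank u :=
      lt_of_le_of_ne (hsup _ hx) (fun hh => hne u x (h₂.symm) hh.symm)
    have hxw : w₁ = x := huniq u w₁ x h h₂.symm hrw₁ hrx
    -- now the first edge equals the last edge, contradicting Nodup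
    subst hxw
    have hedges : (Walk.cons h q).edges = s(u, w₁) :: q.edges := Walk.edges_cons _ _
    have hedges' : (Walk.cons h q).edges = q'.edges ++ [s(w₁, u)] := by
      rw [heq, Walk.edges_concat, List.concat_eq_append]
    have hmem : s(u, w₁) ∈ q.edges := by
      cases hq' : q'.edges with
      | nil =>
        have hl1 : (Walk.cons h q).edges.length = 1 := by
          rw [hedges', hq']; simp
        rw [Walk.length_edges] at hl1
        omega
      | cons e es =>
        have heq2 : s(u, w₁) :: q.edges = e :: (es ++ [s(w₁, u)]) := by
          rw [← hedges, hedges', hq']; rfl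
        obtain ⟨he1, he2⟩ := List.cons_eq_cons.mp heq2
        rw [he2]
        refine List.mem_append_right _ ?_
        rw [Sym2.eq_swap]
        exact List.mem_singleton_self _
    rw [hedges] at hnodup
    exact (List.nodup_cons.1 hnodup).1 hmem






lemma exists_tree [DecidableEq V] (r : V) (L : List (V × V)) (hG : Good G L {r})
    (rank : V → ℕ) (hrk : ∀ q ∈ L, rank q.1 < rank q.2) :
    ∃ H' : G.Subgraph, H'.coe.IsTree ∧
      H'.edgeSet = ↑((L.map fun q => s(q.1, q.2)).toFinset) := by
  obtain ⟨H', hv, hadj, hconn⟩ := good_build L {r} (G.singletonSubgraph r) hG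
    (by simp) Subgraph.singletonSubgraph_connected
  have hadj' : ∀ u v, H'.Adj u v ↔ ∃ q ∈ L, (u, v) = q ∨ (v, u) = q := by
    intro u v
    rw [hadj u v, singletonSubgraph_adj]
    simp
  refine ⟨H', ⟨hconn.coe, ?_⟩, ?_⟩
  · apply isAcyclic_of_rank _ (fun x => rank x.val)
    · rintro ⟨u, hu⟩ ⟨w, hw⟩ huw
      rw [Subgraph.coe_adj] at huw
      obtain ⟨q, hq, hh⟩ := (hadj' u w).1 huw
      have := hrk q hq
      rcases hh with rfl | rfl
      · simp only at this ⊢; omega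
      · simp only at this ⊢; omega
    · rintro ⟨u, hu⟩ ⟨a, ha⟩ ⟨b, hb⟩ hua hub hra hrb
      rw [Subgraph.coe_adj] at hua hub
      obtain ⟨q, hq, hh⟩ := (hadj' u a).1 hua
      obtain ⟨q', hq', hh'⟩ := (hadj' u b).1 hub
      simp only at hra hrb
      have h1 := hrk q hq
      have h2 := hrk q' hq'
      have hqa : q = (a, u) := by
        rcases hh with rfl | rfl
        · simp at h1 hra; omega
        · rfl
      have hqb : q' = (b, u) := by
        rcases hh' with rfl | rfl
        · simp at h2 hrb; omega
        · rfl
      have hnd := hG.snd_nodup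
      have := List.inj_on_of_nodup_map hnd hq hq' (by rw [hqa, hqb])
      rw [hqa, hqb] at this
      exact Subtype.ext (congrArg Prod.fst this)
  · ext e
    induction e with
    | _ u v =>
      rw [Subgraph.mem_edgeSet, hadj' u v]
      simp only [Finset.coe_sort_coe, Finset.mem_coe, List.mem_toFinset, List.mem_map]
      constructor
      · rintro ⟨q, hq, h | h⟩
        · exact ⟨q, hq, by rw [← h]⟩
        · exact ⟨q, hq, by rw [← h]; exact Sym2.eq_swap⟩
      · rintro ⟨q, hq, hqe⟩
        refine ⟨q, hq, ?_⟩
        rw [Sym2.eq_iff] at hqe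
        rcases hqe with ⟨h1, h2⟩ | ⟨h1, h2⟩
        · left; exact Prod.ext_iff.2 ⟨h1.symm, h2.symm⟩
        · right; exact Prod.ext_iff.2 ⟨h1.symm, h2.symm⟩

lemma edgeLabelSum_coe {V : Type*} [Fintype V] [DecidableEq V] (f : Sym2 V → ℤ)
    (F : Finset (Sym2 V)) :
    (∑ e : Sym2 V, (↑F : Set (Sym2 V)).indicator f e) = ∑ e ∈ F, f e := by
  rw [← Finset.sum_subset (Finset.subset_univ F)
    (fun e _ he => Set.indicator_of_notMem (by simpa using he) f)]
  exact Finset.sum_congr rfl fun e he => Set.indicator_of_mem (by simpa using he) f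

lemma sum_map_const {α : Type*} (L : List α) (g : α → ℤ) (c : ℤ)
    (h : ∀ x ∈ L, g x = c) : (L.map g).sum = L.length * c := by
  induction L with
  | nil => simp
  | cons a t ih =>
    simp only [List.map_cons, List.sum_cons, List.length_cons, h a (by simp)]
    rw [ih fun x hx => h x (by simp [hx])]
    push_cast
    ring






section Grid

variable (k l : ℕ) [NeZero k] [NeZero l]

open Fin.NatCast

def vtx (i j : ℕ) : Fin k × Fin l := ((i : Fin k), (j : Fin l))

def GG : SimpleGraph (Fin k × Fin l) := pathGraph k □ pathGraph l

def colL : List ((Fin k × Fin l) × (Fin k × Fin l)) := pathList (fun i => vtx k l i 0) (k - 1)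

def rowL (a : ℕ) : List ((Fin k × Fin l) × (Fin k × Fin l)) :=
  pathList (fun j => vtx k l (2 * a) j) (l - 1)

def rowsL : ℕ → List ((Fin k × Fin l) × (Fin k × Fin l))
  | 0 => []
  | a + 1 => rowsL a ++ rowL k l a

def combL : List ((Fin k × Fin l) × (Fin k × Fin l)) := colL k l ++ rowsL k l ((k - 1) / 2 + 1)

def pendL : List ((Fin k × Fin l) × (Fin k × Fin l)) :=
  ((List.range (k / 2)) ×ˢ (List.range (l - 1))).map
    (fun ab => (vtx k l (2 * ab.1) (ab.2 + 1), vtx k l (2 * ab.1 + 1) (ab.2 + 1)))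

def rk : Fin k × Fin l → ℕ := fun v =>
  if v.2.val = 0 then v.1.val else k + 2 * v.2.val + v.1.val % 2

def colSet : Set (Fin k × Fin l) := {v | v.2.val = 0}

def rowsSet (a : ℕ) : Set (Fin k × Fin l) :=
  {v | v.2.val = 0 ∨ (v.1.val % 2 = 0 ∧ v.1.val < 2 * a)}

def combSet : Set (Fin k × Fin l) := {v | v.2.val = 0 ∨ v.1.val % 2 = 0}

lemma kpos : 0 < k := Nat.pos_of_ne_zero (NeZero.ne k)

lemma eq_vtx_iff (v : Fin k × Fin l) (i j : ℕ) (hi : i < k) (hj : j < l) :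
    v = vtx k l i j ↔ v.1.val = i ∧ v.2.val = j := by
  rw [Prod.ext_iff, Fin.ext_iff, Fin.ext_iff, vtx]
  simp [Fin.val_cast_of_lt hi, Fin.val_cast_of_lt hj]

lemma vtx_fst_val (i j : ℕ) (hi : i < k) : (vtx k l i j).1.val = i := by
  simp [vtx, Fin.val_cast_of_lt hi]

lemma vtx_snd_val (i j : ℕ) (hj : j < l) : (vtx k l i j).2.val = j := by
  simp [vtx, Fin.val_cast_of_lt hj]

lemma adj_h (i j : ℕ) (hj : j + 1 < l) : (GG k l).Adj (vtx k l i j) (vtx k l i (j + 1)) := by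
  show (pathGraph k □ pathGraph l).Adj ((i : Fin k), (j : Fin l)) ((i : Fin k), ((j+1 : ℕ) : Fin l))
  rw [boxProd_adj_right, pathGraph_adj]
  left
  rw [Fin.val_cast_of_lt (by omega : j < l), Fin.val_cast_of_lt hj]

lemma adj_v (i j : ℕ) (hi : i + 1 < k) : (GG k l).Adj (vtx k l i j) (vtx k l (i + 1) j) := by
  show (pathGraph k □ pathGraph l).Adj ((i : Fin k), (j : Fin l)) (((i+1 : ℕ) : Fin k), (j : Fin l))
  rw [boxProd_adj_left, pathGraph_adj]
  left
  rw [Fin.val_cast_of_lt (by omega : i < k), Fin.val_cast_of_lt hi]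

lemma good_colL : Good (GG k l) (colL k l) {vtx k l 0 0} := by
  have hk := kpos k
  apply good_pathList
  · intro i hi j hj hij
    have := (eq_vtx_iff k l _ j 0 (by omega) (Nat.pos_of_ne_zero (NeZero.ne l))).1 hij
    rw [vtx_fst_val k l i 0 (by omega)] at this
    exact this.1
  · exact Set.mem_singleton _
  · intro i h1 h2 hmem
    have := (eq_vtx_iff k l _ 0 0 hk (Nat.pos_of_ne_zero (NeZero.ne l))).1 hmem
    rw [vtx_fst_val k l i 0 (by omega)] at this
    omega
  · intro i hi
    exact adj_v k l i 0 (by omega)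

lemma chl_colL : {vtx k l 0 0} ∪ chl (colL k l) = colSet k l := by
  have hk := kpos k
  have hl := Nat.pos_of_ne_zero (NeZero.ne l)
  rw [colL, chl_pathList]
  ext v
  simp only [Set.mem_union, Set.mem_singleton_iff, Set.mem_setOf_eq, colSet]
  constructor
  · rintro (h | ⟨i, h1, h2, h⟩)
    · exact ((eq_vtx_iff k l v 0 0 hk hl).1 h).2
    · exact ((eq_vtx_iff k l v i 0 (by omega) hl).1 h).2
  · intro h
    by_cases h0 : v.1.val = 0
    · left
      exact (eq_vtx_iff k l v 0 0 hk hl).2 ⟨h0, h⟩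
    · right
      exact ⟨v.1.val, by omega, by have := v.1.isLt; omega,
        (eq_vtx_iff k l v v.1.val 0 v.1.isLt hl).2 ⟨rfl, h⟩⟩

lemma good_rowsL (a : ℕ) (ha : 2 * a ≤ k + 1) :
    Good (GG k l) (rowsL k l a) (colSet k l) ∧
      colSet k l ∪ chl (rowsL k l a) = rowsSet k l a := by
  have hk := kpos k
  have hl := Nat.pos_of_ne_zero (NeZero.ne l)
  induction a with
  | zero =>
    refine ⟨trivial, ?_⟩
    ext v
    simp [rowsL, chl, rowsSet, colSet]
  | succ a ih =>
    obtain ⟨ihg, ihs⟩ := ih (by omega)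
    have h2a : 2 * a < k := by omega
    have hrow : Good (GG k l) (rowL k l a) (rowsSet k l a) := by
      apply good_pathList
      · intro i hi j hj hij
        have := (eq_vtx_iff k l _ (2 * a) j h2a (by omega)).1 hij
        rw [vtx_snd_val k l (2 * a) i (by omega)] at this
        exact this.2
      · simp only [rowsSet, Set.mem_setOf_eq]
        left
        exact vtx_snd_val k l (2 * a) 0 hl
      · intro i h1 h2 hmem
        simp only [rowsSet, Set.mem_setOf_eq] at hmem
        rw [vtx_snd_val k l (2 * a) i (by omega), vtx_fst_val k l (2 * a) i h2a] at hmem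
        omega
      · intro i hi
        exact adj_h k l (2 * a) i (by omega)
    constructor
    · rw [rowsL]
      exact Good.append ihg (by rw [ihs]; exact hrow)
    · rw [rowsL, chl_append, ← Set.union_assoc, ihs, rowL, chl_pathList]
      ext v
      simp only [Set.mem_union, Set.mem_setOf_eq, rowsSet]
      constructor
      · rintro (h | ⟨i, h1, h2, h⟩)
        · rcases h with h | ⟨h1, h2⟩
          · exact Or.inl h
          · right; omega
        · have := (eq_vtx_iff k l v (2 * a) i h2a (by omega)).1 h
          right
          constructor
          · omega
          · omega
      · rintro (h | ⟨h1, h2⟩)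
        · exact Or.inl (Or.inl h)
        · by_cases hv : v.1.val < 2 * a
          · exact Or.inl (Or.inr ⟨h1, hv⟩)
          · have hv1 : v.1.val = 2 * a := by omega
            by_cases hv2 : v.2.val = 0
            · exact Or.inl (Or.inl hv2)
            · right
              exact ⟨v.2.val, by omega, by have := v.2.isLt; omega,
                (eq_vtx_iff k l v (2 * a) v.2.val h2a v.2.isLt).2 ⟨hv1, rfl⟩⟩

lemma good_combL : Good (GG k l) (combL k l) {vtx k l 0 0} := by
  have hk := kpos k
  obtain ⟨hg, _⟩ := good_rowsL k l ((k - 1) / 2 + 1) (by omega)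
  exact Good.append (good_colL k l) (by rw [chl_colL]; exact hg)

lemma chl_combL : {vtx k l 0 0} ∪ chl (combL k l) = combSet k l := by
  have hk := kpos k
  obtain ⟨_, hs⟩ := good_rowsL k l ((k - 1) / 2 + 1) (by omega)
  rw [combL, chl_append, ← Set.union_assoc, chl_colL, hs]
  ext v
  simp only [rowsSet, combSet, Set.mem_setOf_eq]
  have := v.1.isLt
  constructor
  · rintro (h | ⟨h1, _⟩)
    · exact Or.inl h
    · exact Or.inr h1
  · rintro (h | h)
    · exact Or.inl h
    · exact Or.inr ⟨h, by omega⟩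

lemma pendL_mem {q : (Fin k × Fin l) × (Fin k × Fin l)} (hq : q ∈ pendL k l) :
    ∃ a b : ℕ, a < k / 2 ∧ b < l - 1 ∧
      q = (vtx k l (2 * a) (b + 1), vtx k l (2 * a + 1) (b + 1)) := by
  obtain ⟨ab, hab, rfl⟩ := List.mem_map.1 hq
  obtain ⟨ha, hb⟩ := List.mem_product.1 (by exact hab)
  exact ⟨ab.1, ab.2, List.mem_range.1 ha, List.mem_range.1 hb, rfl⟩

lemma pendL_batch (L' : List ((Fin k × Fin l) × (Fin k × Fin l)))
    (hsub : ∀ q ∈ L', q ∈ pendL k l) (hnd : (L'.map Prod.snd).Nodup) :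
    Good (GG k l) L' (combSet k l) := by
  have hk := kpos k
  have hl := Nat.pos_of_ne_zero (NeZero.ne l)
  refine good_batch ?_ ?_ hnd ?_
  · intro q hq
    obtain ⟨a, b, ha, hb, rfl⟩ := pendL_mem k l (hsub q hq)
    simp only [combSet, Set.mem_setOf_eq]
    right
    rw [vtx_fst_val k l (2 * a) (b + 1) (by omega)]
    omega
  · intro q hq
    obtain ⟨a, b, ha, hb, rfl⟩ := pendL_mem k l (hsub q hq)
    simp only [combSet, Set.mem_setOf_eq]
    rw [vtx_fst_val k l (2 * a + 1) (b + 1) (by omega),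
      vtx_snd_val k l (2 * a + 1) (b + 1) (by omega)]
    omega
  · intro q hq
    obtain ⟨a, b, ha, hb, rfl⟩ := pendL_mem k l (hsub q hq)
    exact adj_v k l (2 * a) (b + 1) (by omega)

lemma pendL_snd_nodup : ((pendL k l).map Prod.snd).Nodup := by
  have hk := kpos k
  rw [pendL, List.map_map]
  apply List.Nodup.map_on
  · intro x hx y hy hxy
    obtain ⟨hx1, hx2⟩ := List.mem_product.1 (by exact hx)
    obtain ⟨hy1, hy2⟩ := List.mem_product.1 (by exact hy)
    rw [List.mem_range] at hx1 hx2 hy1 hy2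
    simp only [Function.comp] at hxy
    have := (eq_vtx_iff k l _ (2 * y.1 + 1) (y.2 + 1) (by omega) (by omega)).1 hxy
    rw [vtx_fst_val k l (2 * x.1 + 1) (x.2 + 1) (by omega),
      vtx_snd_val k l (2 * x.1 + 1) (x.2 + 1) (by omega)] at this
    have h1 : x.1 = y.1 := by omega
    have h2 : x.2 = y.2 := by omega
    exact Prod.ext h1 h2
  · exact List.Nodup.product List.nodup_range List.nodup_range

lemma rk_combL : ∀ q ∈ combL k l, rk k l q.1 < rk k l q.2 := by
  have hk := kpos k
  have hl := Nat.pos_of_ne_zero (NeZero.ne l)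
  have hrowsL : ∀ a, 2 * a ≤ k + 1 → ∀ q ∈ rowsL k l a, rk k l q.1 < rk k l q.2 := by
    intro a ha
    induction a with
    | zero => simp [rowsL]
    | succ a ih =>
      intro q hq
      rw [rowsL] at hq
      rcases List.mem_append.1 hq with h | h
      · exact ih (by omega) q h
      · obtain ⟨j, hj, rfl⟩ := List.mem_map.1 h
        rw [List.mem_range] at hj
        simp only [rk]
        rw [vtx_fst_val k l (2 * a) j (by omega), vtx_snd_val k l (2 * a) j (by omega),
          vtx_fst_val k l (2 * a) (j + 1) (by omega), vtx_snd_val k l (2 * a) (j + 1) (by omega)]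
        by_cases h0 : j = 0 <;> simp [h0] <;> omega
  intro q hq
  rcases List.mem_append.1 hq with h | h
  · obtain ⟨i, hi, rfl⟩ := List.mem_map.1 h
    rw [List.mem_range] at hi
    simp only [rk]
    rw [vtx_fst_val k l i 0 (by omega), vtx_snd_val k l i 0 hl,
      vtx_fst_val k l (i + 1) 0 (by omega), vtx_snd_val k l (i + 1) 0 hl]
    simp
  · exact hrowsL ((k - 1) / 2 + 1) (by omega) q h

lemma rk_pendL : ∀ q ∈ pendL k l, rk k l q.1 < rk k l q.2 := by
  have hk := kpos k
  intro q hq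
  obtain ⟨a, b, ha, hb, rfl⟩ := pendL_mem k l hq
  simp only [rk]
  rw [vtx_fst_val k l (2 * a) (b + 1) (by omega), vtx_snd_val k l (2 * a) (b + 1) (by omega),
    vtx_fst_val k l (2 * a + 1) (b + 1) (by omega), vtx_snd_val k l (2 * a + 1) (b + 1) (by omega)]
  simp

end Grid


end GridDisc

/-- For positive integers `k, ℓ`, the (not necessarily spanning) tree
discrepancy of the grid `Pₖ □ Pₗ` is greater than `kℓ/8 − max{k,ℓ}/8 − min{k,ℓ}`: for every
`±1`-labeling `f` of the edges there is a subgraph `H` which is a tree with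
`|f(H)| > kℓ/8 − max{k,ℓ}/8 − min{k,ℓ}`. -/
theorem grid_tree_discrepancy (k l : ℕ) (hk : 0 < k) (hl : 0 < l)
    (f : Sym2 (Fin k × Fin l) → ℤ)
    (hf : ∀ e ∈ (pathGraph k □ pathGraph l).edgeSet, f e = 1 ∨ f e = -1) :
    ∃ H : (pathGraph k □ pathGraph l).Subgraph, H.coe.IsTree ∧
      (k : ℝ) * l / 8 - (max k l : ℝ) / 8 - (min k l : ℝ) <
        |((edgeLabelSum f H.edgeSet : ℤ) : ℝ)| := by
  classical
  haveI : NeZero k := ⟨hk.ne'⟩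
  haveI : NeZero l := ⟨hl.ne'⟩
  set PL := GridDisc.pendL k l with hPL
  set pp : (Fin k × Fin l) × (Fin k × Fin l) → Bool :=
    fun q => decide (f s(q.1, q.2) = 1) with hpp
  set P1 := PL.filter pp with hP1
  set P2 := PL.filter (fun q => !(pp q)) with hP2
  have hsub1 : ∀ q ∈ P1, q ∈ PL := fun q hq => List.mem_of_mem_filter hq
  have hsub2 : ∀ q ∈ P2, q ∈ PL := fun q hq => List.mem_of_mem_filter hq
  have hnd1 : (P1.map Prod.snd).Nodup :=
    (GridDisc.pendL_snd_nodup k l).sublist ((List.filter_sublist).map Prod.snd)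
  have hnd2 : (P2.map Prod.snd).Nodup :=
    (GridDisc.pendL_snd_nodup k l).sublist ((List.filter_sublist).map Prod.snd)
  -- the two "good" lists
  have hg1 : GridDisc.Good (GridDisc.GG k l) (GridDisc.combL k l ++ P1)
      {GridDisc.vtx k l 0 0} := by
    refine GridDisc.Good.append (GridDisc.good_combL k l) ?_
    rw [GridDisc.chl_combL]
    exact GridDisc.pendL_batch k l P1 hsub1 hnd1
  have hg2 : GridDisc.Good (GridDisc.GG k l) (GridDisc.combL k l ++ P2)
      {GridDisc.vtx k l 0 0} := by
    refine GridDisc.Good.append (GridDisc.good_combL k l) ?_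
    rw [GridDisc.chl_combL]
    exact GridDisc.pendL_batch k l P2 hsub2 hnd2
  have hrk1 : ∀ q ∈ GridDisc.combL k l ++ P1,
      GridDisc.rk k l q.1 < GridDisc.rk k l q.2 := by
    intro q hq
    rcases List.mem_append.1 hq with h | h
    · exact GridDisc.rk_combL k l q h
    · exact GridDisc.rk_pendL k l q (hsub1 q h)
  have hrk2 : ∀ q ∈ GridDisc.combL k l ++ P2,
      GridDisc.rk k l q.1 < GridDisc.rk k l q.2 := by
    intro q hq
    rcases List.mem_append.1 hq with h | h
    · exact GridDisc.rk_combL k l q h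
    · exact GridDisc.rk_pendL k l q (hsub2 q h)
  obtain ⟨H1, hT1, hE1⟩ := GridDisc.exists_tree (G := GridDisc.GG k l)
    (GridDisc.vtx k l 0 0) _ hg1 (GridDisc.rk k l) hrk1
  obtain ⟨H2, hT2, hE2⟩ := GridDisc.exists_tree (G := GridDisc.GG k l)
    (GridDisc.vtx k l 0 0) _ hg2 (GridDisc.rk k l) hrk2
  -- computing the label sums
  have key : ∀ (L : List ((Fin k × Fin l) × (Fin k × Fin l))),
      (L.map fun q => s(q.1, q.2)).Nodup →
      edgeLabelSum f ↑((L.map fun q => s(q.1, q.2)).toFinset)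
        = (L.map fun q => f s(q.1, q.2)).sum := by
    intro L hnd
    unfold edgeLabelSum
    rw [GridDisc.edgeLabelSum_coe f, List.sum_toFinset f hnd, List.map_map]
    rfl
  set B : ℤ := ((GridDisc.combL k l).map fun q => f s(q.1, q.2)).sum with hB
  have hpm : ∀ q ∈ PL, f s(q.1, q.2) = 1 ∨ f s(q.1, q.2) = -1 := by
    intro q hq
    refine hf _ ?_
    rw [SimpleGraph.mem_edgeSet]
    exact (GridDisc.pendL_batch k l PL (fun q h => h)
      (GridDisc.pendL_snd_nodup k l)).adj q hq
  have hs1 : (P1.map fun q => f s(q.1, q.2)).sum = (P1.length : ℤ) * 1 := by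
    refine GridDisc.sum_map_const _ _ _ ?_
    intro q hq
    have := (List.mem_filter.1 hq).2
    rw [hpp] at this
    exact of_decide_eq_true this
  have hs2 : (P2.map fun q => f s(q.1, q.2)).sum = (P2.length : ℤ) * (-1) := by
    refine GridDisc.sum_map_const _ _ _ ?_
    intro q hq
    have h2 := (List.mem_filter.1 hq).2
    have h1 : ¬ (f s(q.1, q.2) = 1) := by
      intro hc
      rw [hpp] at h2
      simp [hc] at h2
    rcases hpm q (hsub2 q hq) with h | h
    · exact absurd h h1
    · exact h
  have hval1 : edgeLabelSum f H1.edgeSet = B + (P1.length : ℤ) := by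
    rw [hE1, key _ hg1.sym2_nodup, List.map_append, List.sum_append, hs1, hB]
    ring
  have hval2 : edgeLabelSum f H2.edgeSet = B - (P2.length : ℤ) := by
    rw [hE2, key _ hg2.sym2_nodup, List.map_append, List.sum_append, hs2, hB]
    ring
  -- lengths
  have hPLlen : PL.length = k / 2 * (l - 1) := by
    rw [hPL]
    unfold GridDisc.pendL
    rw [List.length_map, List.length_product, List.length_range, List.length_range]
  have hlen : P1.length + P2.length = k / 2 * (l - 1) := by
    have := (List.length_eq_length_filter_add (l := PL) pp).symm
    rw [hP1, hP2]
    omega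
  -- the numeric bound
  set b : ℝ := (k : ℝ) * l / 8 - (max k l : ℝ) / 8 - (min k l : ℝ) with hbdef
  clear_value b
  have hm : (k : ℝ) - 1 ≤ 2 * ((k / 2 : ℕ) : ℝ) := by
    have h : k ≤ 2 * (k / 2) + 1 := by omega
    have := (Nat.cast_le (α := ℝ)).2 h
    push_cast at this
    linarith
  have hk1 : (1 : ℝ) ≤ (k : ℝ) := by exact_mod_cast hk
  have hl1 : (1 : ℝ) ≤ (l : ℝ) := by exact_mod_cast hl
  have hTcast : ((k / 2 * (l - 1) : ℕ) : ℝ) = ((k / 2 : ℕ) : ℝ) * ((l : ℝ) - 1) := by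
    rw [Nat.cast_mul, Nat.cast_sub (by omega : 1 ≤ l)]
    norm_num
  have hbT : 2 * b < ((k / 2 * (l - 1) : ℕ) : ℝ) := by
    rw [hTcast, hbdef]
    set m : ℝ := ((k / 2 : ℕ) : ℝ) with hmdef
    have hm0 : (0 : ℝ) ≤ m := by positivity
    have hmul : ((k : ℝ) - 1) / 2 * ((l : ℝ) - 1) ≤ m * ((l : ℝ) - 1) :=
      mul_le_mul_of_nonneg_right (by linarith) (by linarith)
    have hexp : ((k : ℝ) - 1) / 2 * ((l : ℝ) - 1)
        = ((k : ℝ) * l - k - l + 1) / 2 := by ring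
    rcases le_total k l with hkl | hkl
    · have hklr : (k : ℝ) ≤ (l : ℝ) := by exact_mod_cast hkl
      rw [max_eq_right hklr, min_eq_left hklr]
      have hkl1 : (l : ℝ) ≤ (k : ℝ) * l := le_mul_of_one_le_left (by linarith) hk1
      linarith
    · have hklr : (l : ℝ) ≤ (k : ℝ) := by exact_mod_cast hkl
      rw [max_eq_left hklr, min_eq_right hklr]
      have hkl1 : (k : ℝ) ≤ (k : ℝ) * l := le_mul_of_one_le_right (by linarith) hl1
      linarith
  -- choose the right tree
  have hdiff : ((B + (P1.length : ℤ) : ℤ) : ℝ) - ((B - (P2.length : ℤ) : ℤ) : ℝ)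
      = ((k / 2 * (l - 1) : ℕ) : ℝ) := by
    rw [← hlen]
    push_cast
    ring
  rcases lt_or_ge b |((B + (P1.length : ℤ) : ℤ) : ℝ)| with h | h
  · exact ⟨H1, hT1, by change b < |((edgeLabelSum f H1.edgeSet : ℤ) : ℝ)|; rw [hval1]; exact h⟩
  · refine ⟨H2, hT2, ?_⟩
    change b < |((edgeLabelSum f H2.edgeSet : ℤ) : ℝ)|
    rw [hval2]
    have h1 := le_abs_self ((B + (P1.length : ℤ) : ℤ) : ℝ)
    have h2 := neg_abs_le ((B - (P2.length : ℤ) : ℤ) : ℝ)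
    have h3 := abs_nonneg ((B - (P2.length : ℤ) : ℤ) : ℝ)
    linarith
end

section
/- For every k ≥ 1, the spanning tree discrepancy of the graph P₂ □ Pₖ (the 2 × k grid) satisfies 𝒟(P₂ □ Pₖ, 𝒯₂ₖ) ≤ 3; that is, there exists a labeling f : E(P₂ □ Pₖ) → {−1, +1} such that every spanning tree T of P₂ □ Pₖ satisfies |f(T)| ≤ 3. -/
open SimpleGraph Finset

open SimpleGraph.Walk in
/-- In a tree, the number of edges with all endpoints inside a set `S` containing `d`
is at most `#S - 1`. -/
lemma tree_card_edges_within {V : Type*} [Fintype V] [DecidableEq V]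
    {T : SimpleGraph V} [Fintype T.edgeSet] (hG : T.IsTree)
    (S : Finset V) (d : V) (hd : d ∈ S)
    (p : Sym2 V → Prop) [DecidablePred p]
    (hp : ∀ e, p e → ∀ v ∈ e, v ∈ S) :
    (T.edgeFinset.filter p).card + 1 ≤ S.card := by
  classical
  choose f hf hf' using (hG.existsUnique_path · d)
  have key : (T.edgeFinset.filter p).card ≤ (S.erase d).card := by
    apply Finset.card_le_card_of_surjOn (fun w => s(w, (f w).getVert 1))
    intro e he
    have he' : e ∈ T.edgeFinset ∧ p e := by
      simpa using he
    revert he'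
    refine Sym2.ind (fun x y he' => ?_) e
    obtain ⟨hmem, hpe⟩ := he'
    have h : T.Adj x y := by simpa using hmem
    have hS : ∀ v ∈ s(x, y), v ∈ S := hp _ hpe
    clear hmem hpe he
    wlog h' : (f x).length ≤ (f y).length generalizing x y
    · rw [Sym2.eq_swap]
      refine this y x h.symm ?_ (le_of_not_ge h')
      intro v hv
      exact hS v (by rwa [Sym2.eq_swap] at hv)
    have hyd : y ≠ d := by
      rintro rfl
      rw [← hf' _ nil IsPath.nil, length_nil,
          ← hf' _ (.cons h .nil) (IsPath.nil.cons <| by simpa using h.ne),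
          length_cons, length_nil] at h'
      simp [Nat.le_zero, Nat.one_ne_zero] at h'
    refine ⟨y, ?_, ?_⟩
    · simp only [Finset.coe_erase, Set.mem_diff, Finset.mem_coe, Set.mem_singleton_iff]
      exact ⟨hS y (Sym2.mem_mk_right x y), hyd⟩
    · have hcons : (Walk.cons h.symm (f x)).IsPath := by
        refine (cons_isPath_iff _ _).2 ⟨hf _, fun hy => ?_⟩
        suffices (f x).takeUntil y hy = .cons h .nil by
          rw [← take_spec _ hy] at h'
          simp [this, hf' _ _ ((hf _).dropUntil hy)] at h'
        refine (hG.existsUnique_path _ _).unique ((hf _).takeUntil _) ?_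
        simp [h.ne]
      have heq : Walk.cons h.symm (f x) = f y := hf' _ _ hcons
      simp only
      rw [← heq]
      rw [show (Walk.cons h.symm (f x)).getVert 1 = (f x).getVert 0 from rfl,
        getVert_zero, Sym2.eq_swap]
  have : (S.erase d).card = S.card - 1 := Finset.card_erase_of_mem hd
  have hS1 : 1 ≤ S.card := Finset.card_pos.mpr ⟨d, hd⟩
  omega

/-- For every `k ≥ 1`, the spanning-tree discrepancy of the `2 × k` grid
`P₂ □ Pₖ` is at most `3`: there is a `±1`-labeling `f` of its edges such that every spanning
tree `T` satisfies `|f(T)| ≤ 3`. -/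
theorem two_by_k_grid_spanning_tree_discrepancy_upper (k : ℕ) (hk : 1 ≤ k) :
    ∃ f : Sym2 (Fin 2 × Fin k) → ℤ,
      (∀ e ∈ (pathGraph 2 □ pathGraph k).edgeSet, f e = 1 ∨ f e = -1) ∧
      ∀ T : SimpleGraph (Fin 2 × Fin k), T ≤ (pathGraph 2 □ pathGraph k) → T.IsTree →
        |edgeLabelSum f T.edgeSet| ≤ 3 := by
  classical
  set m : ℕ := (k + 1) / 2 - 1 with hm
  set P : Sym2 (Fin 2 × Fin k) → Prop := fun e => ∀ v ∈ e, (v.2 : ℕ) ≤ m with hP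
  refine ⟨fun e => if P e then 1 else -1, fun e _ => ?_, ?_⟩
  · by_cases h : P e
    · exact Or.inl (if_pos h)
    · exact Or.inr (if_neg h)
  intro T hTG hT
  -- the sum over the tree edges
  have hsum : edgeLabelSum (fun e => if P e then 1 else -1) T.edgeSet
      = ((T.edgeFinset.filter P).card : ℤ)
        - ((T.edgeFinset.filter fun e => ¬ P e).card : ℤ) := by
    unfold edgeLabelSum
    have h1 : ∀ e : Sym2 (Fin 2 × Fin k), T.edgeSet.indicator (fun e => if P e then 1 else -1) e
        = if e ∈ T.edgeFinset then (if P e then (1 : ℤ) else -1) else 0 := by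
      intro e
      simp [Set.indicator_apply, mem_edgeFinset]
    rw [Finset.sum_congr rfl (fun e _ => h1 e), Finset.sum_ite_mem, Finset.univ_inter,
      ← Finset.sum_filter_add_sum_filter_not T.edgeFinset P]
    rw [Finset.sum_congr rfl (fun e he => if_pos (Finset.mem_filter.mp he).2),
      Finset.sum_congr (rfl : T.edgeFinset.filter (fun e => ¬ P e) = _)
        (fun e he => if_neg (Finset.mem_filter.mp he).2)]
    simp [mul_comm, sub_eq_add_neg]
  set p : ℕ := (T.edgeFinset.filter P).card with hp
  set q : ℕ := (T.edgeFinset.filter fun e => ¬ P e).card with hq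
  have hpq : p + q = 2 * k - 1 := by
    have hc : T.edgeFinset.card + 1 = Fintype.card (Fin 2 × Fin k) := hT.card_edgeFinset
    have hcV : Fintype.card (Fin 2 × Fin k) = 2 * k := by simp
    have hq' : (T.edgeFinset.filter fun e => ¬ P e) = T.edgeFinset \ T.edgeFinset.filter P :=
      Finset.filter_not _ _
    have hle : (T.edgeFinset.filter P).card ≤ T.edgeFinset.card := Finset.card_filter_le _ _
    have hcards : q = T.edgeFinset.card - p := by
      rw [hq, hq', Finset.card_sdiff_of_subset (Finset.filter_subset _ _), hp]
    omega
  rw [hsum]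
  by_cases hk3 : k ≤ 2
  · -- trivial: total number of edges is at most 3
    rw [abs_le]; constructor <;> omega
  push_neg at hk3
  have hmk : m + 1 ≤ k - 1 := by omega
  have hm1k : m + 1 < k := by omega
  have hmk' : m < k := by omega
  -- the set A of vertices in columns ≤ m
  set A : Finset (Fin 2 × Fin k) := univ.filter (fun v : Fin 2 × Fin k => (v.2 : ℕ) ≤ m) with hA
  set B : Finset (Fin 2 × Fin k) := univ.filter (fun v : Fin 2 × Fin k => m < (v.2 : ℕ)) with hB
  have cardA : A.card = 2 * (m + 1) := by
    have h1 : A = (univ : Finset (Fin 2)) ×ˢ (univ.filter fun j : Fin k => (j : ℕ) ≤ m) := by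
      ext ⟨i, j⟩; simp [hA, Finset.mem_product]
    have h2 : (univ.filter fun j : Fin k => (j : ℕ) ≤ m) = Finset.Iic (⟨m, hmk'⟩ : Fin k) := by
      ext j; simp [Fin.le_def]
    rw [h1, Finset.card_product, h2, Fin.card_Iic]
    simp
  have cardB : B.card = 2 * (k - (m + 1)) := by
    have h1 : B = Aᶜ := by
      ext v; simp [hA, hB, not_le]
    have hcV : Fintype.card (Fin 2 × Fin k) = 2 * k := by simp
    rw [h1, Finset.card_compl, cardA]
    omega
  -- upper bound for p
  have hpA : p + 1 ≤ A.card := by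
    refine tree_card_edges_within hT A ((0 : Fin 2), (⟨0, by omega⟩ : Fin k)) (by simp [hA]) P ?_
    intro e he v hv
    simp only [hA, Finset.mem_filter, Finset.mem_univ, true_and]
    exact he v hv
  -- bound for q : edges not within A are within B, except for at most 2 crossing edges
  set e0 : Sym2 (Fin 2 × Fin k) := s(((0 : Fin 2), (⟨m, hmk'⟩ : Fin k)), ((0 : Fin 2), (⟨m + 1, hm1k⟩ : Fin k)))
    with he0
  set e1 : Sym2 (Fin 2 × Fin k) := s(((1 : Fin 2), (⟨m, hmk'⟩ : Fin k)), ((1 : Fin 2), (⟨m + 1, hm1k⟩ : Fin k)))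
    with he1
  have hsub : T.edgeFinset.filter (fun e => ¬ P e)
      ⊆ (T.edgeFinset.filter fun e => ∀ v ∈ e, m < (v.2 : ℕ)) ∪ {e0, e1} := by
    intro e he
    rw [Finset.mem_filter] at he
    obtain ⟨heT, hnP⟩ := he
    by_cases hall : ∀ v ∈ e, m < (v.2 : ℕ)
    · exact Finset.mem_union_left _ (Finset.mem_filter.mpr ⟨heT, hall⟩)
    · refine Finset.mem_union_right _ ?_
      have heG : e ∈ (pathGraph 2 □ pathGraph k).edgeSet :=
        (SimpleGraph.edgeSet_mono hTG) (mem_edgeFinset.mp heT)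
      revert hnP hall heG
      refine Sym2.ind (fun x y hnP hall heG => ?_) e
      rw [mem_edgeSet, boxProd_adj] at heG
      simp only [hP, Sym2.mem_iff, forall_eq_or_imp, forall_eq, not_and_or, not_le,
        not_forall, not_lt] at hnP hall
      -- one endpoint has column ≤ m, the other > m
      have hmix : ((x.2 : ℕ) ≤ m ∧ m < (y.2 : ℕ)) ∨ ((y.2 : ℕ) ≤ m ∧ m < (x.2 : ℕ)) := by
        rcases hnP with h1 | h1 <;> rcases hall with h2 | h2 <;> omega
      rcases heG with ⟨hadj, hcol⟩ | ⟨hadj, hrow⟩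
      · -- a rung: equal columns, contradiction
        rw [hcol] at hmix; omega
      · -- horizontal edge
        rw [pathGraph_adj] at hadj
        have hx2 : (x.2 : ℕ) = m ∧ (y.2 : ℕ) = m + 1 ∨ (y.2 : ℕ) = m ∧ (x.2 : ℕ) = m + 1 := by
          omega
        have hfin : (x.1 : ℕ) = 0 ∨ (x.1 : ℕ) = 1 := by
          have := x.1.isLt; omega
        simp only [Finset.mem_insert, Finset.mem_singleton, he0, he1]
        have hy1 : (y.1 : ℕ) = (x.1 : ℕ) := by rw [hrow]
        rcases hx2 with ⟨ha, hb⟩ | ⟨ha, hb⟩ <;> rcases hfin with h1 | h1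
        · left
          have hxeq : x = ((0 : Fin 2), (⟨m, hmk'⟩ : Fin k)) :=
            Prod.ext (Fin.ext h1) (Fin.ext ha)
          have hyeq : y = ((0 : Fin 2), (⟨m + 1, hm1k⟩ : Fin k)) :=
            Prod.ext (Fin.ext (by simp [hy1, h1])) (Fin.ext hb)
          rw [hxeq, hyeq]
        · right
          have hxeq : x = ((1 : Fin 2), (⟨m, hmk'⟩ : Fin k)) :=
            Prod.ext (Fin.ext h1) (Fin.ext ha)
          have hyeq : y = ((1 : Fin 2), (⟨m + 1, hm1k⟩ : Fin k)) :=
            Prod.ext (Fin.ext (by simp [hy1, h1])) (Fin.ext hb)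
          rw [hxeq, hyeq]
        · left
          have hxeq : x = ((0 : Fin 2), (⟨m + 1, hm1k⟩ : Fin k)) :=
            Prod.ext (Fin.ext h1) (Fin.ext hb)
          have hyeq : y = ((0 : Fin 2), (⟨m, hmk'⟩ : Fin k)) :=
            Prod.ext (Fin.ext (by simp [hy1, h1])) (Fin.ext ha)
          rw [hxeq, hyeq, Sym2.eq_swap]
        · right
          have hxeq : x = ((1 : Fin 2), (⟨m + 1, hm1k⟩ : Fin k)) :=
            Prod.ext (Fin.ext h1) (Fin.ext hb)
          have hyeq : y = ((1 : Fin 2), (⟨m, hmk'⟩ : Fin k)) :=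
            Prod.ext (Fin.ext (by simp [hy1, h1])) (Fin.ext ha)
          rw [hxeq, hyeq, Sym2.eq_swap]
  have hqin : (T.edgeFinset.filter fun e => ∀ v ∈ e, m < (v.2 : ℕ)).card + 1 ≤ B.card := by
    refine tree_card_edges_within hT B ((0 : Fin 2), (⟨k - 1, by omega⟩ : Fin k))
      (by simp [hB]; omega) _ ?_
    intro e he v hv
    simp only [hB, Finset.mem_filter, Finset.mem_univ, true_and]
    exact he v hv
  have hqB : q ≤ (T.edgeFinset.filter fun e => ∀ v ∈ e, m < (v.2 : ℕ)).card + 2 := by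
    calc q ≤ ((T.edgeFinset.filter fun e => ∀ v ∈ e, m < (v.2 : ℕ)) ∪ {e0, e1}).card :=
        Finset.card_le_card hsub
      _ ≤ (T.edgeFinset.filter fun e => ∀ v ∈ e, m < (v.2 : ℕ)).card + ({e0, e1} : Finset _).card :=
        Finset.card_union_le _ _
      _ ≤ _ := by
        have : ({e0, e1} : Finset (Sym2 (Fin 2 × Fin k))).card ≤ 2 := Finset.card_insert_le _ _ |>.trans (by simp)
        omega
  rw [abs_le]
  constructor <;> omega
end

section
/- For every k ≥ 2, the spanning tree discrepancy of the k × k grid graph satisfies 𝒟(Pₖ □ Pₖ, 𝒯ₙ) ≤ k − 1, where n = k²; that is, there exists a labeling f : E(Pₖ □ Pₖ) → {−1, +1} (label +1 the edges in the upper half of the grid and −1 those in the lower half) such that every spanning tree T of Pₖ □ Pₖ satisfies |f(T)| ≤ k − 1. -/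
open SimpleGraph Finset

open SimpleGraph.Walk

lemma tree_card_filter_le {V : Type*} [Fintype V] [DecidableEq V] {G : SimpleGraph V}
    [Fintype G.edgeSet] (hG : G.IsTree) (S : Finset V) (r : V) (hr : r ∈ S) :
    (G.edgeFinset.filter (fun e => ∀ v ∈ e, v ∈ S)).card + 1 ≤ S.card := by
  classical
  choose f hf hf' using (hG.existsUnique_path · r)
  set g : V → Sym2 V := fun w =>
    if h : w = r then s(r, r) else ((f w).firstDart (not_nil_of_ne h)).edge with hg
  have hsurj : Set.SurjOn g (S.erase r : Finset V)
      ((G.edgeFinset.filter (fun e => ∀ v ∈ e, v ∈ S)) : Finset (Sym2 V)) := by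
    intro e he
    simp only [coe_filter, Set.mem_setOf_eq, mem_edgeFinset] at he
    obtain ⟨he, heS⟩ := he
    induction e with
    | h x y =>
      rw [SimpleGraph.mem_edgeSet] at he
      have hxS : x ∈ S := heS x (by simp)
      have hyS : y ∈ S := heS y (by simp)
      clear heS
      wlog h' : (f x).length ≤ (f y).length generalizing x y
      · rw [Sym2.eq_swap]
        exact this y x he.symm hyS hxS (le_of_not_ge h')
      have hyr : y ≠ r := by
        rintro rfl
        rw [← hf' _ nil IsPath.nil, length_nil,
            ← hf' _ (.cons he .nil) (IsPath.nil.cons <| by simpa using he.ne),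
            length_cons, length_nil] at h'
        simp [Nat.le_zero, Nat.one_ne_zero] at h'
      refine ⟨y, by simp [Finset.mem_erase, hyr, hyS], ?_⟩
      simp only [hg, dif_neg hyr]
      refine dart_edge_eq_mk'_iff.2 <| Or.inr ?_
      rw [← hf' _ (.cons he.symm (f x)) ((cons_isPath_iff _ _).2 ⟨hf _, fun hy => ?contra⟩)]
      · simp only [firstDart_toProd, getVert_cons_succ, getVert_zero, Prod.swap_prod_mk]
      case contra =>
        suffices (f x).takeUntil y hy = .cons he .nil by
          rw [← take_spec _ hy] at h'
          simp [this, hf' _ _ ((hf _).dropUntil hy)] at h'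
        refine (hG.existsUnique_path _ _).unique ((hf _).takeUntil _) ?_
        simp [he.ne]
  have := Finset.card_le_card_of_surjOn g hsurj
  rw [Finset.card_erase_of_mem hr] at this
  have hS1 : 1 ≤ S.card := Finset.card_pos.2 ⟨r, hr⟩
  omega

lemma card_pos_filter (k N : ℕ) (hk : 0 < k) (hN : N ≤ k * k) :
    (Finset.univ.filter (fun v : Fin k × Fin k => v.2.val * k + v.1.val < N)).card = N := by
  have key : (Finset.univ.filter (fun v : Fin k × Fin k => v.2.val * k + v.1.val < N)).card
      = (Finset.range N).card := by
    refine Finset.card_bij' (fun v _ => v.2.val * k + v.1.val)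
      (fun n hn => (⟨n % k, Nat.mod_lt _ hk⟩, ⟨n / k,
        (Nat.div_lt_iff_lt_mul hk).2 (lt_of_lt_of_le (Finset.mem_range.1 hn) hN)⟩))
      ?_ ?_ ?_ ?_
    · intro v hv
      simp only [Finset.mem_filter] at hv
      simpa using hv.2
    · intro n hn
      simp only [Finset.mem_filter, Finset.mem_univ, true_and]
      have h : n / k * k + n % k = n := by rw [mul_comm]; exact Nat.div_add_mod n k
      rw [h]
      exact Finset.mem_range.1 hn
    · intro v hv
      have h1 : (v.2.val * k + v.1.val) % k = v.1.val := by
        rw [add_comm, Nat.add_mul_mod_self_right, Nat.mod_eq_of_lt v.1.isLt]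
      have h2 : (v.2.val * k + v.1.val) / k = v.2.val := by
        rw [add_comm, Nat.add_mul_div_right _ _ hk, Nat.div_eq_of_lt v.1.isLt, zero_add]
      exact Prod.ext (Fin.ext h1) (Fin.ext h2)
    · intro n hn
      simp only
      rw [mul_comm]
      exact Nat.div_add_mod n k
  rw [key, Finset.card_range]

/-- Position of a grid vertex in row-major order. -/
def gridPos {k : ℕ} (v : Fin k × Fin k) : ℕ := v.2.val * k + v.1.val

lemma gridPos_step {k : ℕ} {x y : Fin k × Fin k}
    (h : (pathGraph k □ pathGraph k).Adj x y) :
    gridPos x + 1 = gridPos y ∨ gridPos y + 1 = gridPos x ∨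
      gridPos x + k = gridPos y ∨ gridPos y + k = gridPos x := by
  rw [SimpleGraph.boxProd_adj] at h
  unfold gridPos
  rcases h with ⟨h1, h2⟩ | ⟨h1, h2⟩
  · rw [pathGraph_adj] at h1
    rw [show x.2.val * k = y.2.val * k by rw [h2]]
    omega
  · rw [pathGraph_adj] at h1
    rw [show (x.1 : ℕ) = (y.1 : ℕ) by rw [h2]]
    rcases h1 with h | h
    · have : y.2.val * k = x.2.val * k + k := by rw [← h, add_one_mul]
      omega
    · have : x.2.val * k = y.2.val * k + k := by rw [← h, add_one_mul]
      omega

/-- For every `k ≥ 2`, the spanning-tree discrepancy of the `k × k` grid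
`Pₖ □ Pₖ` is at most `k − 1`: there is a `±1`-labeling `f` of its edges such that every
spanning tree `T` satisfies `|f(T)| ≤ k − 1`. -/
theorem grid_spanning_tree_discrepancy_upper (k : ℕ) (hk : 2 ≤ k) :
    ∃ f : Sym2 (Fin k × Fin k) → ℤ,
      (∀ e ∈ (pathGraph k □ pathGraph k).edgeSet, f e = 1 ∨ f e = -1) ∧
      ∀ T : SimpleGraph (Fin k × Fin k), T ≤ (pathGraph k □ pathGraph k) → T.IsTree →
        |edgeLabelSum f T.edgeSet| ≤ (k : ℤ) - 1 := by
  classical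
  have hk0 : 0 < k := by omega
  set N : ℕ := k * (k + 1) / 2 with hN
  have h2N : 2 * N = k * k + k := by
    have hdvd : 2 ∣ k * (k + 1) := (Nat.even_mul_succ_self k).two_dvd
    rw [hN, Nat.mul_div_cancel' hdvd, Nat.mul_add, Nat.mul_one]
  have hkK : k ≤ k * k := Nat.le_mul_of_pos_left k hk0
  have hNle : N ≤ k * k := by omega
  set P : Sym2 (Fin k × Fin k) → Prop := fun e => ∀ v ∈ e, gridPos v < N with hP
  refine ⟨fun e => if P e then 1 else -1, fun e _ => ?_, ?_⟩
  · by_cases h : P e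
    · exact Or.inl (if_pos h)
    · exact Or.inr (if_neg h)
  intro T hT hTree
  set E := T.edgeFinset with hE
  have hsum : edgeLabelSum (fun e => if P e then (1 : ℤ) else -1) T.edgeSet
      = ∑ e ∈ E, (if P e then (1 : ℤ) else -1) := by
    unfold edgeLabelSum
    refine (Finset.sum_congr rfl fun e _ => ?_).trans
      (by rw [Finset.sum_ite_mem, Finset.univ_inter])
    rw [Set.indicator_apply]
    simp [hE, SimpleGraph.mem_edgeFinset]
  have hEcard : E.card + 1 = k * k := by
    rw [hE]
    have h := hTree.card_edgeFinset
    rwa [Fintype.card_prod, Fintype.card_fin] at h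
  set A := E.filter P with hA'
  set B := E.filter (fun e => ¬ P e) with hB'
  have hAB : A.card + B.card = E.card := Finset.card_filter_add_card_filter_not _
  have hsum2 : ∑ e ∈ E, (if P e then (1 : ℤ) else -1) = (A.card : ℤ) - B.card := by
    rw [← Finset.sum_filter_add_sum_filter_not E P]
    rw [Finset.sum_congr rfl (fun e he => if_pos (Finset.mem_filter.1 he).2),
        Finset.sum_congr rfl (fun e he => if_neg (Finset.mem_filter.1 he).2),
        Finset.sum_const, Finset.sum_const]
    simp only [nsmul_eq_mul, mul_one, mul_neg_one]
    ring
  set Sp := Finset.univ.filter (fun v : Fin k × Fin k => gridPos v < N) with hSp'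
  have hSp : Sp.card = N := card_pos_filter k N hk0 hNle
  set Sm := Finset.univ.filter (fun v : Fin k × Fin k => ¬ gridPos v < N - k) with hSm'
  have hSm : Sm.card = N := by
    have h1 : (Finset.univ.filter (fun v : Fin k × Fin k => gridPos v < N - k)).card = N - k :=
      card_pos_filter k (N - k) hk0 (by omega)
    have h2 := Finset.card_filter_add_card_filter_not
      (s := (Finset.univ : Finset (Fin k × Fin k))) (p := fun v => gridPos v < N - k)
    rw [Finset.card_univ, Fintype.card_prod, Fintype.card_fin] at h2
    rw [hSm']
    omega
  have hrp : ((⟨0, hk0⟩ : Fin k), (⟨0, hk0⟩ : Fin k)) ∈ Sp := by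
    exact Finset.mem_filter.2 ⟨Finset.mem_univ _, by simp only [gridPos]; omega⟩
  have hrm : ((⟨k - 1, by omega⟩ : Fin k), (⟨k - 1, by omega⟩ : Fin k)) ∈ Sm := by
    have hmul : (k - 1) * k + k = k * k := by
      rcases k with _ | m
      · omega
      · simp only [Nat.add_sub_cancel]
        ring
    exact Finset.mem_filter.2 ⟨Finset.mem_univ _, by simp only [gridPos]; omega⟩
  have hAle : A.card + 1 ≤ N := by
    rw [← hSp]
    have heq : A = E.filter (fun e => ∀ v ∈ e, v ∈ Sp) := by
      apply Finset.filter_congr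
      intro e _
      simp [hSp', hP]
    rw [heq]
    exact tree_card_filter_le hTree Sp _ hrp
  have hBle : B.card + 1 ≤ N := by
    have hsub : B ⊆ E.filter (fun e => ∀ v ∈ e, v ∈ Sm) := by
      intro e he
      rw [hB', Finset.mem_filter] at he
      obtain ⟨he1, he2⟩ := he
      rw [Finset.mem_filter]
      refine ⟨he1, ?_⟩
      have heg : e ∈ (pathGraph k □ pathGraph k).edgeSet :=
        SimpleGraph.edgeSet_mono hT (SimpleGraph.mem_edgeFinset.1 he1)
      induction e with
      | h x y =>
        rw [SimpleGraph.mem_edgeSet] at heg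
        have hstep := gridPos_step heg
        have hxy : ¬ gridPos x < N ∨ ¬ gridPos y < N := by
          by_contra hc
          push_neg at hc
          refine he2 (fun v hv => ?_)
          rcases Sym2.mem_iff.1 hv with rfl | rfl
          · exact hc.1
          · exact hc.2
        intro w hw
        simp only [hSm', Finset.mem_filter, Finset.mem_univ, true_and]
        rcases Sym2.mem_iff.1 hw with rfl | rfl <;> omega
    have h1 := Finset.card_le_card hsub
    have h2 := tree_card_filter_le hTree Sm _ hrm
    rw [← hE] at h2
    omega
  rw [hsum, hsum2, abs_le]
  constructor <;> omega
end

section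
/- For every k ≥ 1, the path discrepancy of the graph Pₖ □ P₂ (the 2 × k grid) satisfies 𝒟(Pₖ □ P₂, 𝒫) ≥ k/2; that is, for every labeling f : E(Pₖ □ P₂) → {−1, +1} there exists a path P in Pₖ □ P₂ with |f(P)| ≥ k/2. -/
open SimpleGraph Finset

namespace TwoByKGrid

abbrev V (k : ℕ) := Fin k × Fin 2
abbrev G (k : ℕ) : SimpleGraph (V k) := pathGraph k □ pathGraph 2

def rb : Bool → Fin 2 := fun b => if b then 1 else 0

variable (n : ℕ)

def cl (i : ℕ) : Fin (n+1) := ⟨i % (n+1), Nat.mod_lt _ (Nat.succ_pos n)⟩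

lemma cl_val (i : ℕ) (h : i < n+1) : (cl n i).val = i := Nat.mod_eq_of_lt h

def vt (i : ℕ) (b : Bool) : V (n+1) := (cl n i, rb b)

lemma vt_eq {i j : ℕ} {b b' : Bool} (h1 : i = j) (h2 : b = b') :
    vt n i b = vt n j b' := by subst h1; subst h2; rfl

def vertE (i : ℕ) : Sym2 (V (n+1)) := s(vt n i false, vt n i true)
def horizE (i : ℕ) (b : Bool) : Sym2 (V (n+1)) := s(vt n i b, vt n (i+1) b)

lemma adj_vert (i : ℕ) (b : Bool) : (G (n+1)).Adj (vt n i b) (vt n i (!b)) := by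
  refine boxProd_adj.2 (Or.inr ⟨?_, rfl⟩)
  rw [pathGraph_adj]
  cases b <;> simp [rb, vt]

lemma vertE_eq (i : ℕ) (b : Bool) : s(vt n i b, vt n i (!b)) = vertE n i := by
  cases b
  · rfl
  · exact Sym2.eq_swap

lemma adj_horiz (i : ℕ) (h : i + 1 < n + 1) (b : Bool) :
    (G (n+1)).Adj (vt n i b) (vt n (i+1) b) := by
  refine boxProd_adj.2 (Or.inl ⟨?_, rfl⟩)
  rw [pathGraph_adj]
  left
  simp [vt, cl_val n i (by omega), cl_val n (i+1) h]

variable (c : ℕ → Bool) (r₀ : Bool)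

def srow : ℕ → Bool
  | 0 => r₀
  | (i+1) => if c i then !(srow i) else srow i

lemma adj_vert2 {i : ℕ} (hc : c i = true) :
    (G (n+1)).Adj (vt n i (srow c r₀ i)) (vt n i (srow c r₀ (i+1))) := by
  have h : srow c r₀ (i+1) = !(srow c r₀ i) := by simp [srow, hc]
  rw [h]; exact adj_vert n i _


lemma srow_succ_true {i : ℕ} (hc : c i = true) : srow c r₀ (i+1) = !(srow c r₀ i) := by
  simp [srow, hc]

lemma srow_succ_false {i : ℕ} (hc : ¬ c i = true) : srow c r₀ (i+1) = srow c r₀ i := by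
  simp [srow, hc]

lemma vt_ne_row (i : ℕ) (b : Bool) : vt n i b ≠ vt n i (!b) := by
  cases b <;> simp [vt, rb]

lemma vt_ne_col {i j : ℕ} (hi : i < n+1) (hj : j < n+1) (hne : i ≠ j) (b b' : Bool) :
    vt n i b ≠ vt n j b' := by
  intro hx
  have := congrArg (fun x => x.1.val) hx
  simp only [vt] at this
  rw [cl_val n i hi, cl_val n j hj] at this
  exact hne this

def snake : (j : ℕ) → (i : ℕ) → (h : i + j + 1 = n + 1) →
    (G (n+1)).Walk (vt n i (srow c r₀ i)) (vt n n (srow c r₀ (n+1)))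
  | 0, i, h =>
    if hc : c i = true then
      (Walk.cons (adj_vert2 n c r₀ hc) Walk.nil).copy rfl
        (vt_eq n (by omega) (by rw [show i = n by omega]))
    else
      Walk.nil.copy rfl
        (vt_eq n (by omega)
          (by rw [show (n:ℕ)+1 = i+1 by omega, srow_succ_false c r₀ hc,
                  show i = n by omega]))
  | (j+1), i, h =>
    if hc : c i = true then
      Walk.cons (adj_vert2 n c r₀ hc)
        (Walk.cons (adj_horiz n i (by omega) (srow c r₀ (i+1)))
          (snake j (i+1) (by omega)))
    else
      Walk.cons (adj_horiz n i (by omega) (srow c r₀ i))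
        ((snake j (i+1) (by omega)).copy
          (vt_eq n rfl (by simp [srow, hc])) rfl)

lemma snake_col : ∀ (j i : ℕ) (h : i + j + 1 = n + 1),
    ∀ x ∈ (snake n c r₀ j i h).support, i ≤ x.1.val := by
  intro j
  induction j with
  | zero =>
    intro i h x hx
    simp only [snake] at hx
    split at hx <;>
      simp only [Walk.support_copy, Walk.support_cons, Walk.support_nil,
        List.mem_cons, List.mem_singleton, List.not_mem_nil, or_false] at hx <;>
      rcases hx with rfl | rfl <;>
      simp [vt, cl_val n i (by omega : i < n + 1), cl_val n n (by omega : n < n + 1)]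
  | succ j ih =>
    intro i h x hx
    simp only [snake] at hx
    split at hx <;>
      simp only [Walk.support_cons, Walk.support_copy, List.mem_cons] at hx
    · rcases hx with rfl | rfl | hx
      · simp [vt, cl_val n i (by omega : i < n + 1)]
      · simp [vt, cl_val n i (by omega : i < n + 1)]
      · have := ih (i+1) (by omega) x hx
        omega
    · rcases hx with rfl | hx
      · simp [vt, cl_val n i (by omega : i < n + 1)]
      · have := ih (i+1) (by omega) x hx
        omega

lemma snake_isPath : ∀ (j i : ℕ) (h : i + j + 1 = n + 1),
    (snake n c r₀ j i h).IsPath := by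
  intro j
  induction j with
  | zero =>
    intro i h
    simp only [snake]
    split
    case isTrue hc =>
      rw [Walk.isPath_copy]
      refine (Walk.cons_isPath_iff _ _).2 ⟨Walk.IsPath.nil, ?_⟩
      simp only [Walk.support_nil, List.mem_singleton]
      rw [srow_succ_true c r₀ hc]
      exact vt_ne_row n i _
    case isFalse hc =>
      rw [Walk.isPath_copy]; exact Walk.IsPath.nil
  | succ j ih =>
    intro i h
    simp only [snake]
    have hcol := snake_col n c r₀ j (i+1) (by omega)
    split
    case isTrue hc =>
      refine (Walk.cons_isPath_iff _ _).2 ⟨(Walk.cons_isPath_iff _ _).2 ⟨ih (i+1) (by omega), ?_⟩, ?_⟩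
      · intro hx
        have := hcol _ hx
        simp [vt, cl_val n i (by omega : i < n + 1)] at this
      · simp only [Walk.support_cons, List.mem_cons]
        rintro (hx | hx)
        · rw [srow_succ_true c r₀ hc] at hx
          exact vt_ne_row n i _ hx
        · have := hcol _ hx
          simp [vt, cl_val n i (by omega : i < n + 1)] at this
    case isFalse hc =>
      refine (Walk.cons_isPath_iff _ _).2 ⟨by rw [Walk.isPath_copy]; exact ih (i+1) (by omega), ?_⟩
      rw [Walk.support_copy]
      intro hx
      have := hcol _ hx
      simp [vt, cl_val n i (by omega : i < n + 1)] at this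

lemma snake_sum (f : Sym2 (V (n+1)) → ℤ) : ∀ (j i : ℕ) (h : i + j + 1 = n + 1),
    ((snake n c r₀ j i h).edges.map f).sum =
      (∑ m ∈ Ico i (n+1), if c m then f (vertE n m) else 0)
      + (∑ m ∈ Ico i n, f (horizE n m (srow c r₀ (m+1)))) := by
  intro j
  induction j with
  | zero =>
    intro i h
    obtain rfl : i = n := by omega
    rw [Nat.Ico_succ_singleton, Finset.Ico_self, Finset.sum_singleton, Finset.sum_empty]
    simp only [snake]
    split
    case isTrue hc =>
      rw [Walk.edges_copy]
      simp only [Walk.edges_cons, Walk.edges_nil, List.map_cons, List.map_nil,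
        List.sum_cons, List.sum_nil]
      rw [srow_succ_true c r₀ hc, vertE_eq]
    case isFalse hc =>
      rw [Walk.edges_copy]
      simp [hc]
  | succ j ih =>
    intro i h
    have h1 : i < n + 1 := by omega
    have h2 : i < n := by omega
    rw [Finset.sum_eq_sum_Ico_succ_bot h1, Finset.sum_eq_sum_Ico_succ_bot h2]
    simp only [snake]
    split
    case isTrue hc =>
      simp only [Walk.edges_cons, List.map_cons, List.sum_cons]
      rw [ih (i+1) (by omega)]
      rw [srow_succ_true c r₀ hc, vertE_eq]
      show f (vertE n i) + (f (horizE n i _) + _) = _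
      ring
    case isFalse hc =>
      simp only [Walk.edges_cons, Walk.edges_copy, List.map_cons, List.sum_cons]
      rw [ih (i+1) (by omega)]
      rw [srow_succ_false c r₀ hc]
      show f (horizE n i _) + _ = _
      ring

lemma srow_not (m : ℕ) : srow c true m = !(srow c false m) := by
  induction m with
  | zero => rfl
  | succ m ih =>
    by_cases hc : c m = true
    · rw [srow_succ_true c _ hc, srow_succ_true c _ hc, ih]
    · rw [srow_succ_false c _ hc, srow_succ_false c _ hc, ih]

lemma hpair (f : Sym2 (V (n+1)) → ℤ) (m : ℕ) :
    f (horizE n m (srow c false (m+1))) + f (horizE n m (srow c true (m+1))) =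
    f (horizE n m false) + f (horizE n m true) := by
  rw [srow_not]
  cases srow c false (m+1)
  · simp
  · simp
    ring

end TwoByKGrid

open TwoByKGrid in
/-- For every `k ≥ 1`, the path discrepancy of the `2 × k` grid `Pₖ □ P₂`
is at least `k/2`: for every `±1`-labeling `f` of its edges there is a path `P` with
`|f(P)| ≥ k/2`. -/
theorem two_by_k_grid_path_discrepancy (k : ℕ) (hk : 1 ≤ k)
    (f : Sym2 (Fin k × Fin 2) → ℤ)
    (hf : ∀ e ∈ (pathGraph k □ pathGraph 2).edgeSet, f e = 1 ∨ f e = -1) :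
    ∃ (u v : Fin k × Fin 2) (p : (pathGraph k □ pathGraph 2).Walk u v), p.IsPath ∧
      (k : ℝ) / 2 ≤ |(((p.edges.map f).sum : ℤ) : ℝ)| := by
  obtain ⟨n, rfl⟩ : ∃ n, k = n + 1 := ⟨k - 1, by omega⟩
  classical
  set c : ℕ → Bool := fun i => decide (f (vertE n i) = 1) with hcdef
  set c' : ℕ → Bool := fun i => !(c i) with hc'def
  have h0 : 0 + n + 1 = n + 1 := by omega
  -- the four snakes
  set p₁ := snake n c false n 0 h0 with hp₁
  set p₂ := snake n c true n 0 h0 with hp₂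
  set p₃ := snake n c' false n 0 h0 with hp₃
  set p₄ := snake n c' true n 0 h0 with hp₄
  set S₁ := ((p₁.edges.map f).sum : ℤ) with hS₁
  set S₂ := ((p₂.edges.map f).sum : ℤ) with hS₂
  set S₃ := ((p₃.edges.map f).sum : ℤ) with hS₃
  set S₄ := ((p₄.edges.map f).sum : ℤ) with hS₄
  -- vertical sums
  have hvert : ∀ m : ℕ, (if c m then f (vertE n m) else 0)
      - (if c' m then f (vertE n m) else 0) = 1 := by
    intro m
    have hmem : vertE n m ∈ (pathGraph (n+1) □ pathGraph 2).edgeSet :=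
      (SimpleGraph.mem_edgeSet _).2 (adj_vert n m false)
    rcases hf _ hmem with h1 | h1 <;> simp [hc'def, hcdef, h1]
  have key : S₁ + S₂ - S₃ - S₄ = 2 * ((n : ℤ) + 1) := by
    rw [hS₁, hS₂, hS₃, hS₄, hp₁, hp₂, hp₃, hp₄,
      snake_sum n c false f n 0 h0, snake_sum n c true f n 0 h0,
      snake_sum n c' false f n 0 h0, snake_sum n c' true f n 0 h0]
    have hH : ∀ cc : ℕ → Bool,
        (∑ m ∈ Ico 0 n, f (horizE n m (srow cc false (m+1))))
        + (∑ m ∈ Ico 0 n, f (horizE n m (srow cc true (m+1))))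
        = ∑ m ∈ Ico 0 n, (f (horizE n m false) + f (horizE n m true)) := by
      intro cc
      rw [← Finset.sum_add_distrib]
      exact Finset.sum_congr rfl fun m _ => hpair n cc f m
    have hV : (∑ m ∈ Ico 0 (n+1), if c m then f (vertE n m) else 0)
        - (∑ m ∈ Ico 0 (n+1), if c' m then f (vertE n m) else 0) = (n : ℤ) + 1 := by
      rw [← Finset.sum_sub_distrib, Finset.sum_congr rfl fun m _ => hvert m]
      simp [Nat.card_Ico]
    have := hH c
    have := hH c'
    linarith [hV]
  have habs : 2 * ((n : ℤ) + 1) ≤ 4 * |S₁| ∨ 2 * ((n : ℤ) + 1) ≤ 4 * |S₂|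
      ∨ 2 * ((n : ℤ) + 1) ≤ 4 * |S₃| ∨ 2 * ((n : ℤ) + 1) ≤ 4 * |S₄| := by
    by_contra hcon
    push_neg at hcon
    obtain ⟨a1, a2, a3, a4⟩ := hcon
    have := le_abs_self S₁
    have := le_abs_self S₂
    have := neg_abs_le S₃
    have := neg_abs_le S₄
    linarith
  have final : ∀ S : ℤ, 2 * ((n : ℤ) + 1) ≤ 4 * |S| →
      ((n + 1 : ℕ) : ℝ) / 2 ≤ |((S : ℤ) : ℝ)| := by
    intro S h
    rw [← Int.cast_abs]
    have h2 := (@Int.cast_le ℝ _ _ _).2 h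
    push_cast at h2 ⊢
    linarith
  rcases habs with h | h | h | h
  · exact ⟨_, _, p₁, snake_isPath n c false n 0 h0, final S₁ h⟩
  · exact ⟨_, _, p₂, snake_isPath n c true n 0 h0, final S₂ h⟩
  · exact ⟨_, _, p₃, snake_isPath n c' false n 0 h0, final S₃ h⟩
  · exact ⟨_, _, p₄, snake_isPath n c' true n 0 h0, final S₄ h⟩
end
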